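/- arXiv:1001.1373 — 7 statements merged into one kernel-verified Lean document; each statement's English description precedes it below -/
import Mathlib

section
/- If V is a vector space and X, Y are any two linear subspaces of V, then there exists a basis B of V such that both X ∩ B is a basis of X and Y ∩ B is a basis of Y. -/
open Submodule Set

/-- From a linearly independent set, spans of disjoint subsets are disjoint. -/
lemma aux_disj {F V : Type*} [Field F] [AddCommGroup V] [Module F V] {s t : Set V}
    (h : LinearIndependent F ((↑) : s → V)) (hts : t ⊆ s) :
    Disjoint (span F t) (span F (s \ t)) := by
  have := h.disjoint_span_image (s := (↑) ⁻¹' t) (t := (↑) ⁻¹' (s \ t))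
    (by
      rw [Set.disjoint_left]
      rintro ⟨x, hx⟩ h1 h2
      exact h2.2 h1)
  have h1 : (↑) '' ((↑) ⁻¹' t : Set s) = t := by
    ext x; constructor
    · rintro ⟨⟨y, hy⟩, hy2, rfl⟩; exact hy2
    · intro hx; exact ⟨⟨x, hts hx⟩, hx, rfl⟩
  have h2 : (↑) '' ((↑) ⁻¹' (s \ t) : Set s) = s \ t := by
    ext x; constructor
    · rintro ⟨⟨y, hy⟩, hy2, rfl⟩; exact hy2
    · intro hx; exact ⟨⟨x, hx.1⟩, hx, rfl⟩
  rwa [h1, h2] at this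

lemma aux_not_mem {F V : Type*} [Field F] [AddCommGroup V] [Module F V] {s : Set V} {b : V}
    (h : LinearIndependent F ((↑) : s → V)) (hb : b ∈ s) :
    b ∉ span F (s \ {b}) := by
  have hd := aux_disj h (t := {b}) (Set.singleton_subset_iff.2 hb)
  intro hmem
  have hb0 : b ≠ 0 := h.ne_zero ⟨b, hb⟩
  exact hb0 (Submodule.disjoint_def.1 hd b (subset_span rfl) hmem)

/-- Any two linear subspaces `X, Y` of a vector space `V` are basis-compatible:
there is a basis `B` of `V` such that `X ∩ B` is a basis of `X` and `Y ∩ B` is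
a basis of `Y`. -/
theorem stmt3 {F V : Type*} [Field F] [AddCommGroup V] [Module F V]
    (X Y : Submodule F V) :
    ∃ B : Set V, LinearIndependent F ((↑) : B → V) ∧ Submodule.span F B = ⊤ ∧
      LinearIndependent F ((↑) : ((X : Set V) ∩ B : Set V) → V) ∧
      Submodule.span F ((X : Set V) ∩ B) = X ∧
      LinearIndependent F ((↑) : ((Y : Set V) ∩ B : Set V) → V) ∧
      Submodule.span F ((Y : Set V) ∩ B) = Y := by
  classical
  -- basis of X ⊓ Y
  obtain ⟨S₀, hS₀sub, hS₀span, hS₀li⟩ := exists_linearIndependent F ((X ⊓ Y : Submodule F V) : Set V)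
  rw [Submodule.span_eq] at hS₀span
  -- extend to basis of X
  have hS₀X : S₀ ⊆ (X : Set V) := hS₀sub.trans (fun v hv => hv.1)
  have hS₀Y : S₀ ⊆ (Y : Set V) := hS₀sub.trans (fun v hv => hv.2)
  set SX := LinearIndepOn.extend (linearIndependent_subtype_iff.1 hS₀li) hS₀X with hSXdef
  have hSXsub : SX ⊆ (X : Set V) := LinearIndepOn.extend_subset (linearIndependent_subtype_iff.1 hS₀li) hS₀X
  have hS₀SX : S₀ ⊆ SX := LinearIndepOn.subset_extend (linearIndependent_subtype_iff.1 hS₀li) hS₀X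
  have hSXli : LinearIndependent F ((↑) : SX → V) := LinearIndepOn.linearIndepOn_extend (linearIndependent_subtype_iff.1 hS₀li) hS₀X
  have hSXspan : span F SX = X := by
    rw [LinearIndepOn.span_extend_eq_span (linearIndependent_subtype_iff.1 hS₀li) hS₀X, Submodule.span_eq]
  -- extend to basis of Y
  set SY := LinearIndepOn.extend (linearIndependent_subtype_iff.1 hS₀li) hS₀Y with hSYdef
  have hSYsub : SY ⊆ (Y : Set V) := LinearIndepOn.extend_subset (linearIndependent_subtype_iff.1 hS₀li) hS₀Y
  have hS₀SY : S₀ ⊆ SY := LinearIndepOn.subset_extend (linearIndependent_subtype_iff.1 hS₀li) hS₀Y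
  have hSYli : LinearIndependent F ((↑) : SY → V) := LinearIndepOn.linearIndepOn_extend (linearIndependent_subtype_iff.1 hS₀li) hS₀Y
  have hSYspan : span F SY = Y := by
    rw [LinearIndepOn.span_extend_eq_span (linearIndependent_subtype_iff.1 hS₀li) hS₀Y, Submodule.span_eq]
  set C := SY \ S₀ with hCdef
  have hSYC : SY = S₀ ∪ C := by
    rw [hCdef, Set.union_diff_cancel hS₀SY]
  have hCli : LinearIndependent F ((↑) : C → V) := LinearIndepOn.mono (linearIndependent_subtype_iff.1 hSYli) (Set.diff_subset)
  have hdisj0C : Disjoint (span F S₀) (span F C) := aux_disj hSYli hS₀SY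
  -- X disjoint from span C
  have hXC : Disjoint (span F SX) (span F C) := by
    rw [hSXspan]
    rw [Submodule.disjoint_def]
    intro v hvX hvC
    have hvY : v ∈ Y := by
      have : span F C ≤ Y := by
        rw [← hSYspan]; exact span_mono Set.diff_subset
      exact this hvC
    have hv0 : v ∈ span F S₀ := by rw [hS₀span]; exact ⟨hvX, hvY⟩
    exact Submodule.disjoint_def.1 hdisj0C v hv0 hvC
  have hUli : LinearIndependent F ((↑) : ↥(SX ∪ C) → V) := LinearIndepOn.id_union (linearIndependent_subtype_iff.1 hSXli) (linearIndependent_subtype_iff.1 hCli) hXC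
  -- extend to basis of V
  set B := LinearIndepOn.extend (linearIndependent_subtype_iff.1 hUli) (Set.subset_univ _) with hBdef
  have hUB : SX ∪ C ⊆ B := LinearIndepOn.subset_extend (linearIndependent_subtype_iff.1 hUli) _
  have hBli : LinearIndependent F ((↑) : B → V) := LinearIndepOn.linearIndepOn_extend (linearIndependent_subtype_iff.1 hUli) _
  have hBspan : span F B = ⊤ := by
    rw [eq_top_iff]
    intro v _
    exact LinearIndepOn.subset_span_extend (linearIndependent_subtype_iff.1 hUli) (Set.subset_univ _) (Set.mem_univ v)
  -- key: any b ∈ B inside X is in SX; inside Y is in SY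
  have hSXB : SX ⊆ B := (Set.subset_union_left).trans hUB
  have hCB : C ⊆ B := (Set.subset_union_right).trans hUB
  have hSYB : SY ⊆ B := by rw [hSYC]; exact Set.union_subset (hS₀SX.trans hSXB) hCB
  have key : ∀ b ∈ B, b ∉ SX ∪ C → ∀ (W : Submodule F V) (s : Set V), s ⊆ SX ∪ C →
      span F s = W → b ∉ W := by
    intro b hbB hb W s hs hspan hbW
    apply aux_not_mem hBli hbB
    have : (W : Set V) ⊆ span F (B \ {b}) := by
      rw [← hspan]
      refine Submodule.span_le.2 (fun x hx => subset_span ?_)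
      refine ⟨hUB (hs hx), ?_⟩
      rintro rfl
      exact hb (hs hx)
    exact this hbW
  have hXB : (X : Set V) ∩ B = SX := by
    apply Set.Subset.antisymm
    · rintro b ⟨hbX, hbB⟩
      by_contra hbSX
      by_cases hbC : b ∈ C
      · -- b ∈ C ∩ X ⊆ X ⊓ Y = span S₀, contradicting disjointness
        have hbY : b ∈ Y := hSYsub (Set.diff_subset hbC)
        have hb0 : b ∈ span F S₀ := by rw [hS₀span]; exact ⟨hbX, hbY⟩
        have hbC' : b ∈ span F C := subset_span hbC
        have : b = 0 := Submodule.disjoint_def.1 hdisj0C b hb0 hbC'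
        exact hCli.ne_zero ⟨b, hbC⟩ this
      · exact key b hbB (by simp [hbSX, hbC]) X SX Set.subset_union_left hSXspan hbX
    · intro b hb; exact ⟨hSXsub hb, hSXB hb⟩
  have hYB : (Y : Set V) ∩ B = SY := by
    apply Set.Subset.antisymm
    · rintro b ⟨hbY, hbB⟩
      by_contra hbSY
      by_cases hbSX : b ∈ SX
      · have hbX : b ∈ X := hSXsub hbSX
        have hb0 : b ∈ span F S₀ := by rw [hS₀span]; exact ⟨hbX, hbY⟩
        have hbS₀ : b ∉ S₀ := fun h => hbSY (hS₀SY h)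
        have hdisj : Disjoint (span F S₀) (span F (SX \ S₀)) := aux_disj hSXli hS₀SX
        have hbmem : b ∈ span F (SX \ S₀) := subset_span ⟨hbSX, hbS₀⟩
        have : b = 0 := Submodule.disjoint_def.1 hdisj b hb0 hbmem
        exact hSXli.ne_zero ⟨b, hbSX⟩ this
      · have hbC : b ∉ C := fun h => hbSY (Set.diff_subset h)
        refine key b hbB (by simp [hbSX, hbC]) Y SY ?_ hSYspan hbY
        rw [hSYC]; exact Set.union_subset (fun x hx => Or.inl (hS₀SX hx)) Set.subset_union_right
    · intro b hb; exact ⟨hSYsub hb, hSYB hb⟩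
  refine ⟨B, hBli, hBspan, ?_, ?_, ?_, ?_⟩
  · rw [hXB]; exact hSXli
  · rw [hXB, hSXspan]
  · rw [hYB]; exact hSYli
  · rw [hYB, hSYspan]
end

section
/- For any serializable network code on the 2-cycle with sources x into u and y into v and edges a = (u,v), b = (v,u), if H(a) + H(b) > 0 then H(a) + H(b) > H(a|x) + H(b|y) (the 'greedy inequality'). Equivalently, H(a) + H(b) > H(ax) - H(x) + H(by) - H(y). -/
/-- Shannon entropy of (the random variable given by) a function `f` on a finite
message set `M` equipped with the uniform distribution. -/
noncomputable def ent {M : Type*} [Fintype M] {A : Type*} [DecidableEq A] (f : M → A) : ℝ :=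
  -∑ a ∈ Finset.univ.image f,
      (((Finset.univ.filter fun m => f m = a).card : ℝ) / (Fintype.card M : ℝ)) *
        Real.log (((Finset.univ.filter fun m => f m = a).card : ℝ) / (Fintype.card M : ℝ))

/-- Serializability of a network code on the 2-cycle with sources `x` (into `u`)
and `y` (into `v`) and edges `a = (u,v)`, `b = (v,u)`.  There exist time-indexed
coding functions `Fa i`, `Fb i` whose joint values determine and are determined by
`fa`, `fb` respectively, and such that each `Fa j` is computable from `fx` together
with the earlier values `Fb i`, `i < j` (and symmetrically for `Fb j`). -/
def Serializable2Cycle {M X Y A B : Type*}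
    (fx : M → X) (fy : M → Y) (fa : M → A) (fb : M → B) : Prop :=
  ∃ (k : ℕ) (SA SB : Fin k → Type) (Fa : ∀ i, M → SA i) (Fb : ∀ i, M → SB i),
    (∀ m₁ m₂, fa m₁ = fa m₂ ↔ ∀ i, Fa i m₁ = Fa i m₂) ∧
    (∀ m₁ m₂, fb m₁ = fb m₂ ↔ ∀ i, Fb i m₁ = Fb i m₂) ∧
    (∀ j m₁ m₂, fx m₁ = fx m₂ → (∀ i, i < j → Fb i m₁ = Fb i m₂) → Fa j m₁ = Fa j m₂) ∧
    (∀ j m₁ m₂, fy m₁ = fy m₂ → (∀ i, i < j → Fa i m₁ = Fa i m₂) → Fb j m₁ = Fb j m₂)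


section AuxEnt


variable {M : Type*} [Fintype M] [Nonempty M]

noncomputable def pr {A : Type*} [DecidableEq A] (f : M → A) (a : A) : ℝ :=
  ((Finset.univ.filter fun m => f m = a).card : ℝ) / (Fintype.card M : ℝ)

lemma cardM_pos : (0:ℝ) < (Fintype.card M : ℝ) := by exact_mod_cast Fintype.card_pos

variable {A X C : Type*} [DecidableEq A] [DecidableEq X] [DecidableEq C]

lemma pr_nonneg (f : M → A) (a : A) : 0 ≤ pr f a :=
  div_nonneg (by positivity) (le_of_lt cardM_pos)

lemma pr_pos (f : M → A) {a : A} (ha : a ∈ Finset.univ.image f) : 0 < pr f a := by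
  obtain ⟨m, -, rfl⟩ := Finset.mem_image.1 ha
  apply div_pos _ cardM_pos
  have : 0 < (Finset.univ.filter fun m' => f m' = f m).card :=
    Finset.card_pos.2 ⟨m, by simp⟩
  exact_mod_cast this

omit [Nonempty M] in
lemma pr_eq_zero (f : M → A) {a : A} (ha : a ∉ Finset.univ.image f) : pr f a = 0 := by
  have h : (Finset.univ.filter fun m => f m = a) = ∅ := by
    ext m
    simp only [Finset.mem_filter, Finset.mem_univ, true_and, Finset.notMem_empty, iff_false]
    intro h; exact ha (Finset.mem_image.2 ⟨m, Finset.mem_univ m, h⟩)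
  simp [pr, h]

lemma sum_pr (f : M → A) : ∑ a ∈ Finset.univ.image f, pr f a = 1 := by
  have h := Finset.card_eq_sum_card_fiberwise
    (s := (Finset.univ : Finset M)) (t := Finset.univ.image f) (f := f)
    (fun m _ => Finset.mem_image_of_mem f (Finset.mem_univ m))
  rw [Finset.card_univ] at h
  unfold pr
  rw [← Finset.sum_div, div_eq_one_iff_eq (ne_of_gt (cardM_pos (M := M))), ← Nat.cast_sum]
  exact_mod_cast h.symm
omit [Nonempty M] in
lemma ent_eq (f : M → A) :
    ent f = ∑ a ∈ Finset.univ.image f, Real.negMulLog (pr f a) := by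
  unfold ent pr
  rw [← Finset.sum_neg_distrib]
  exact Finset.sum_congr rfl fun a _ => by rw [Real.negMulLog, neg_mul]

omit [Nonempty M] in
lemma filter_pair (f : M → A) (g : M → X) (a : A) (x : X) :
    (Finset.univ.filter fun m => (f m, g m) = (a, x)) =
      Finset.univ.filter fun m => f m = a ∧ g m = x := by
  ext m; simp [Prod.ext_iff]

omit [Nonempty M] in
lemma pr_fst (f : M → A) (g : M → X) (a : A) :
    pr f a = ∑ x ∈ Finset.univ.image g, pr (fun m => (f m, g m)) (a, x) := by
  have h1 : (Finset.univ.filter fun m => f m = a).card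
      = ∑ x ∈ Finset.univ.image g,
          ((Finset.univ.filter fun m => f m = a).filter fun m => g m = x).card :=
    Finset.card_eq_sum_card_fiberwise (fun m _ => Finset.mem_image_of_mem g (Finset.mem_univ m))
  simp only [Finset.filter_filter] at h1
  simp only [pr, filter_pair]
  rw [← Finset.sum_div, ← Nat.cast_sum, h1]

omit [Nonempty M] in
lemma pr_snd (f : M → A) (g : M → X) (x : X) :
    pr g x = ∑ a ∈ Finset.univ.image f, pr (fun m => (f m, g m)) (a, x) := by
  have h1 : (Finset.univ.filter fun m => g m = x).card
      = ∑ a ∈ Finset.univ.image f,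
          ((Finset.univ.filter fun m => g m = x).filter fun m => f m = a).card :=
    Finset.card_eq_sum_card_fiberwise (fun m _ => Finset.mem_image_of_mem f (Finset.mem_univ m))
  simp only [Finset.filter_filter] at h1
  have h2 : ∀ a : A, (Finset.univ.filter fun m => g m = x ∧ f m = a)
      = Finset.univ.filter fun m => f m = a ∧ g m = x := by
    intro a; ext m; simp [and_comm]
  simp only [h2] at h1
  simp only [pr, filter_pair]
  rw [← Finset.sum_div, ← Nat.cast_sum, h1]

lemma gibbs_lt {ι : Type*} {S T : Finset ι} (hST : S ⊆ T) {p q : ι → ℝ}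
    (hp0 : ∀ s ∈ S, 0 < p s) (hq0 : ∀ s ∈ T, 0 < q s)
    (hp1 : ∑ s ∈ S, p s = 1) (hq1 : ∑ s ∈ T, q s = 1)
    (hne : S ≠ T ∨ ∃ s ∈ S, p s ≠ q s) :
    ∑ s ∈ S, p s * Real.log (q s / p s) < 0 := by
  classical
  have hSne : S.Nonempty := by
    by_contra h
    rw [Finset.not_nonempty_iff_eq_empty] at h
    rw [h, Finset.sum_empty] at hp1
    norm_num at hp1
  have hsumq_le : ∑ s ∈ S, q s ≤ 1 := by
    rw [← hq1]
    exact Finset.sum_le_sum_of_subset_of_nonneg hST (fun i hi _ => (hq0 i hi).le)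
  have hsumq_pos : 0 < ∑ s ∈ S, q s :=
    Finset.sum_pos (fun i hi => hq0 i (hST hi)) hSne
  by_cases hconst : ∃ j ∈ S, ∃ k ∈ S, q j / p j ≠ q k / p k
  · have jensen := strictConcaveOn_log_Ioi.lt_map_sum (t := S) (w := p)
      (p := fun s => q s / p s) hp0 hp1
      (fun s hs => Set.mem_Ioi.2 (div_pos (hq0 s (hST hs)) (hp0 s hs))) hconst
    simp only [smul_eq_mul] at jensen
    have hq' : ∑ s ∈ S, p s * (q s / p s) = ∑ s ∈ S, q s :=
      Finset.sum_congr rfl (fun s hs => by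
        rw [mul_comm (p s) (q s / p s), div_mul_cancel₀ _ (ne_of_gt (hp0 s hs))])
    rw [hq'] at jensen
    calc ∑ s ∈ S, p s * Real.log (q s / p s) < Real.log (∑ s ∈ S, q s) := jensen
      _ ≤ 0 := Real.log_nonpos hsumq_pos.le hsumq_le
  · push_neg at hconst
    obtain ⟨s0, hs0⟩ := hSne
    set c := q s0 / p s0 with hc
    have hqc : ∀ s ∈ S, q s = c * p s := fun s hs =>
      (div_eq_iff (ne_of_gt (hp0 s hs))).1 (hconst s hs s0 hs0)
    have hsc : ∑ s ∈ S, q s = c := by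
      rw [Finset.sum_congr rfl hqc, ← Finset.mul_sum, hp1, mul_one]
    have hterm : ∀ s ∈ S, p s * Real.log (q s / p s) = p s * Real.log c :=
      fun s hs => by rw [hconst s hs s0 hs0]
    rw [Finset.sum_congr rfl hterm, ← Finset.sum_mul, hp1, one_mul]
    have hcpos : 0 < c := hsc ▸ hsumq_pos
    have hc1 : c ≤ 1 := hsc ▸ hsumq_le
    rcases lt_or_eq_of_le hc1 with h | h
    · exact Real.log_neg hcpos h
    · exfalso
      have hSTeq : S = T := by
        by_contra hne'
        obtain ⟨t, htT, htS⟩ := Finset.exists_of_ssubset (hST.ssubset_of_ne hne')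
        have hlt : ∑ s ∈ S, q s < ∑ s ∈ T, q s :=
          Finset.sum_lt_sum_of_subset hST htT htS (hq0 t htT)
            (fun j hj _ => (hq0 j hj).le)
        rw [hq1, hsc, h] at hlt
        exact lt_irrefl 1 hlt
      rcases hne with hne | ⟨s, hs, hpq⟩
      · exact hne hSTeq
      · apply hpq
        rw [hqc s hs, h, one_mul]

lemma gibbs_le {ι : Type*} {S T : Finset ι} (hST : S ⊆ T) {p q : ι → ℝ}
    (hp0 : ∀ s ∈ S, 0 < p s) (hq0 : ∀ s ∈ T, 0 < q s)
    (hp1 : ∑ s ∈ S, p s = 1) (hq1 : ∑ s ∈ T, q s = 1) :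
    ∑ s ∈ S, p s * Real.log (q s / p s) ≤ 0 := by
  by_cases hne : S ≠ T ∨ ∃ s ∈ S, p s ≠ q s
  · exact (gibbs_lt hST hp0 hq0 hp1 hq1 hne).le
  · push_neg at hne
    obtain ⟨hST', hpq⟩ := hne
    have h0 : ∀ s ∈ S, p s * Real.log (q s / p s) = 0 := by
      intro s hs
      rw [← hpq s hs, div_self (ne_of_gt (hp0 s hs)), Real.log_one, mul_zero]
    rw [Finset.sum_congr rfl h0, Finset.sum_const_zero]
omit [Nonempty M] in
lemma pair_S_subset_T (f : M → A) (g : M → X) :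
    Finset.univ.image (fun m => (f m, g m)) ⊆
      (Finset.univ.image f) ×ˢ (Finset.univ.image g) := by
  intro s hs
  obtain ⟨m, -, rfl⟩ := Finset.mem_image.1 hs
  exact Finset.mk_mem_product (Finset.mem_image_of_mem f (Finset.mem_univ m))
    (Finset.mem_image_of_mem g (Finset.mem_univ m))

omit [Nonempty M] in
lemma ent_sum_pair_fst (f : M → A) (g : M → X) :
    ent f = -∑ s ∈ Finset.univ.image (fun m => (f m, g m)),
        pr (fun m => (f m, g m)) s * Real.log (pr f s.1) := by
  have h1 : ∀ a ∈ Finset.univ.image f, Real.negMulLog (pr f a)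
      = ∑ x ∈ Finset.univ.image g,
          -(pr (fun m => (f m, g m)) (a, x) * Real.log (pr f a)) := by
    intro a _
    rw [Finset.sum_neg_distrib, ← Finset.sum_mul, ← pr_fst, Real.negMulLog, neg_mul]
  calc ent f = ∑ a ∈ Finset.univ.image f, Real.negMulLog (pr f a) := ent_eq f
    _ = ∑ a ∈ Finset.univ.image f, ∑ x ∈ Finset.univ.image g,
          -(pr (fun m => (f m, g m)) (a, x) * Real.log (pr f a)) :=
        Finset.sum_congr rfl h1
    _ = ∑ s ∈ (Finset.univ.image f) ×ˢ (Finset.univ.image g),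
          -(pr (fun m => (f m, g m)) (s.1, s.2) * Real.log (pr f s.1)) :=
        (Finset.sum_product' _ _ _).symm
    _ = ∑ s ∈ Finset.univ.image (fun m => (f m, g m)),
          -(pr (fun m => (f m, g m)) (s.1, s.2) * Real.log (pr f s.1)) := by
        refine (Finset.sum_subset (pair_S_subset_T f g) ?_).symm
        intro s _ hsS
        rw [Prod.mk.eta, pr_eq_zero _ hsS, zero_mul, neg_zero]
    _ = -∑ s ∈ Finset.univ.image (fun m => (f m, g m)),
          pr (fun m => (f m, g m)) s * Real.log (pr f s.1) := by
        simp only [Prod.mk.eta, Finset.sum_neg_distrib]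

omit [Nonempty M] in
lemma ent_sum_pair_snd (f : M → A) (g : M → X) :
    ent g = -∑ s ∈ Finset.univ.image (fun m => (f m, g m)),
        pr (fun m => (f m, g m)) s * Real.log (pr g s.2) := by
  have h1 : ∀ x ∈ Finset.univ.image g, Real.negMulLog (pr g x)
      = ∑ a ∈ Finset.univ.image f,
          -(pr (fun m => (f m, g m)) (a, x) * Real.log (pr g x)) := by
    intro x _
    rw [Finset.sum_neg_distrib, ← Finset.sum_mul, ← pr_snd, Real.negMulLog, neg_mul]
  calc ent g = ∑ x ∈ Finset.univ.image g, Real.negMulLog (pr g x) := ent_eq g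
    _ = ∑ x ∈ Finset.univ.image g, ∑ a ∈ Finset.univ.image f,
          -(pr (fun m => (f m, g m)) (a, x) * Real.log (pr g x)) :=
        Finset.sum_congr rfl h1
    _ = ∑ a ∈ Finset.univ.image f, ∑ x ∈ Finset.univ.image g,
          -(pr (fun m => (f m, g m)) (a, x) * Real.log (pr g x)) := Finset.sum_comm
    _ = ∑ s ∈ (Finset.univ.image f) ×ˢ (Finset.univ.image g),
          -(pr (fun m => (f m, g m)) (s.1, s.2) * Real.log (pr g s.2)) :=
        (Finset.sum_product' _ _ _).symm
    _ = ∑ s ∈ Finset.univ.image (fun m => (f m, g m)),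
          -(pr (fun m => (f m, g m)) (s.1, s.2) * Real.log (pr g s.2)) := by
        refine (Finset.sum_subset (pair_S_subset_T f g) ?_).symm
        intro s _ hsS
        rw [Prod.mk.eta, pr_eq_zero _ hsS, zero_mul, neg_zero]
    _ = -∑ s ∈ Finset.univ.image (fun m => (f m, g m)),
          pr (fun m => (f m, g m)) s * Real.log (pr g s.2) := by
        simp only [Prod.mk.eta, Finset.sum_neg_distrib]

lemma ent_pair_diff (f : M → A) (g : M → X) :
    ent f + ent g - ent (fun m => (f m, g m)) =
      -∑ s ∈ Finset.univ.image (fun m => (f m, g m)),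
        pr (fun m => (f m, g m)) s *
          Real.log ((pr f s.1 * pr g s.2) / pr (fun m => (f m, g m)) s) := by
  have hterm : ∀ s ∈ Finset.univ.image (fun m => (f m, g m)),
      pr (fun m => (f m, g m)) s *
          Real.log ((pr f s.1 * pr g s.2) / pr (fun m => (f m, g m)) s)
        = pr (fun m => (f m, g m)) s * Real.log (pr f s.1)
          + pr (fun m => (f m, g m)) s * Real.log (pr g s.2)
          - pr (fun m => (f m, g m)) s * Real.log (pr (fun m => (f m, g m)) s) := by
    intro s hs
    have hT := pair_S_subset_T f g hs
    have h1 : 0 < pr f s.1 := pr_pos f (Finset.mem_product.1 hT).1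
    have h2 : 0 < pr g s.2 := pr_pos g (Finset.mem_product.1 hT).2
    have h3 : 0 < pr (fun m => (f m, g m)) s := pr_pos _ hs
    rw [Real.log_div (by positivity) (ne_of_gt h3), Real.log_mul (ne_of_gt h1) (ne_of_gt h2)]
    ring
  rw [Finset.sum_congr rfl hterm]
  have hE3 : ent (fun m => (f m, g m)) = -∑ s ∈ Finset.univ.image (fun m => (f m, g m)),
      pr (fun m => (f m, g m)) s * Real.log (pr (fun m => (f m, g m)) s) := by
    rw [ent_eq, ← Finset.sum_neg_distrib]
    exact Finset.sum_congr rfl fun s _ => by rw [Real.negMulLog, neg_mul]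
  rw [ent_sum_pair_fst f g, ent_sum_pair_snd f g, hE3, Finset.sum_sub_distrib,
    Finset.sum_add_distrib]
  ring
def Indep (f : M → A) (g : M → X) : Prop :=
  ∀ a x, pr (fun m => (f m, g m)) (a, x) = pr f a * pr g x

lemma sum_T_q (f : M → A) (g : M → X) :
    ∑ s ∈ (Finset.univ.image f) ×ˢ (Finset.univ.image g), pr f s.1 * pr g s.2 = 1 := by
  rw [Finset.sum_product' (f := fun a x => pr f a * pr g x)]
  calc ∑ a ∈ Finset.univ.image f, ∑ x ∈ Finset.univ.image g, pr f a * pr g x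
      = ∑ a ∈ Finset.univ.image f, pr f a * ∑ x ∈ Finset.univ.image g, pr g x :=
        Finset.sum_congr rfl fun a _ => (Finset.mul_sum _ _ _).symm
    _ = 1 := by rw [sum_pr g]; simp [sum_pr f]

lemma ent_pair_le (f : M → A) (g : M → X) :
    ent (fun m => (f m, g m)) ≤ ent f + ent g := by
  have h := gibbs_le (pair_S_subset_T f g)
    (p := pr (fun m => (f m, g m))) (q := fun s => pr f s.1 * pr g s.2)
    (fun s hs => pr_pos _ hs)
    (fun s hs => mul_pos (pr_pos f (Finset.mem_product.1 hs).1)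
      (pr_pos g (Finset.mem_product.1 hs).2))
    (sum_pr _) (sum_T_q f g)
  have hd := ent_pair_diff f g
  linarith

lemma ent_pair_lt (f : M → A) (g : M → X) (hind : ¬ Indep f g) :
    ent (fun m => (f m, g m)) < ent f + ent g := by
  have hne : Finset.univ.image (fun m => (f m, g m)) ≠
        (Finset.univ.image f) ×ˢ (Finset.univ.image g) ∨
      ∃ s ∈ Finset.univ.image (fun m => (f m, g m)),
        pr (fun m => (f m, g m)) s ≠ pr f s.1 * pr g s.2 := by
    rw [Indep, not_forall] at hind
    obtain ⟨a, hind⟩ := hind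
    rw [not_forall] at hind
    obtain ⟨x, hax⟩ := hind
    by_cases hS : (a, x) ∈ Finset.univ.image (fun m => (f m, g m))
    · exact Or.inr ⟨(a, x), hS, hax⟩
    · left
      intro hEq
      have h0 : pr (fun m => (f m, g m)) (a, x) = 0 := pr_eq_zero _ hS
      have hfa : pr f a * pr g x ≠ 0 := fun h => hax (h0.trans h.symm)
      have ha : a ∈ Finset.univ.image f := by
        by_contra hna
        exact hfa (by rw [pr_eq_zero f hna, zero_mul])
      have hx : x ∈ Finset.univ.image g := by
        by_contra hnx
        exact hfa (by rw [pr_eq_zero g hnx, mul_zero])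
      exact hS (hEq ▸ Finset.mk_mem_product ha hx)
  have h := gibbs_lt (pair_S_subset_T f g)
    (p := pr (fun m => (f m, g m))) (q := fun s => pr f s.1 * pr g s.2)
    (fun s hs => pr_pos _ hs)
    (fun s hs => mul_pos (pr_pos f (Finset.mem_product.1 hs).1)
      (pr_pos g (Finset.mem_product.1 hs).2))
    (sum_pr _) (sum_T_q f g) hne
  have hd := ent_pair_diff f g
  linarith
omit [Nonempty M] in
lemma indep_comp {f : M → A} {g : M → X} {h : M → C}
    (hind : Indep f g) (hdet : ∀ m₁ m₂, f m₁ = f m₂ → h m₁ = h m₂) : Indep h g := by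
  intro c x
  classical
  set Sc : Finset A := (Finset.univ.image f).filter (fun a => ∃ m, f m = a ∧ h m = c) with hSc
  have hmem : ∀ m : M, h m = c ↔ f m ∈ Sc := by
    intro m
    constructor
    · intro hm
      rw [hSc]
      simp only [Finset.mem_filter]
      exact ⟨Finset.mem_image_of_mem f (Finset.mem_univ m), m, rfl, hm⟩
    · intro hm
      rw [hSc] at hm
      simp only [Finset.mem_filter] at hm
      obtain ⟨-, m', hm', hc⟩ := hm
      rw [← hdet m' m hm']
      exact hc
  have key1 : (Finset.univ.filter fun m => h m = c).card
      = ∑ a ∈ Sc, (Finset.univ.filter fun m => f m = a).card := by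
    have h1 := Finset.card_eq_sum_card_fiberwise
      (s := Finset.univ.filter fun m => h m = c) (t := Sc) (f := f)
      (fun m hm => (hmem m).1 (by simpa using hm))
    rw [h1]
    refine Finset.sum_congr rfl fun a ha => ?_
    congr 1
    ext m
    simp only [Finset.mem_filter, Finset.mem_univ, true_and]
    constructor
    · rintro ⟨-, hfa⟩; exact hfa
    · intro hfa; exact ⟨(hmem m).2 (by rw [hfa]; exact ha), hfa⟩
  have key2 : (Finset.univ.filter fun m => h m = c ∧ g m = x).card
      = ∑ a ∈ Sc, (Finset.univ.filter fun m => f m = a ∧ g m = x).card := by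
    have h1 := Finset.card_eq_sum_card_fiberwise
      (s := Finset.univ.filter fun m => h m = c ∧ g m = x) (t := Sc) (f := f)
      (fun m hm => (hmem m).1 (by simp only [Finset.coe_filter, Finset.mem_coe, Set.mem_setOf_eq, Finset.mem_filter, Finset.mem_univ, true_and] at hm; exact hm.1))
    rw [h1]
    refine Finset.sum_congr rfl fun a ha => ?_
    congr 1
    ext m
    simp only [Finset.mem_filter, Finset.mem_univ, true_and]
    constructor
    · rintro ⟨⟨-, hg⟩, hfa⟩; exact ⟨hfa, hg⟩
    · rintro ⟨hfa, hg⟩; exact ⟨⟨(hmem m).2 (by rw [hfa]; exact ha), hg⟩, hfa⟩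
  have e1 : pr (fun m => (h m, g m)) (c, x) = ∑ a ∈ Sc, pr (fun m => (f m, g m)) (a, x) := by
    simp only [pr, filter_pair]
    rw [← Finset.sum_div, ← Nat.cast_sum, key2]
  rw [e1, Finset.sum_congr rfl (fun a _ => hind a x), ← Finset.sum_mul]
  congr 1
  simp only [pr]
  rw [← Finset.sum_div, ← Nat.cast_sum, key1]

lemma const_of_indep {g : M → X} {h : M → C}
    (hind : Indep h g) (hdet : ∀ m₁ m₂, g m₁ = g m₂ → h m₁ = h m₂) :
    ∀ m₁ m₂ : M, h m₁ = h m₂ := by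
  have main : ∀ m m' : M, h m' = h m := by
    intro m m'
    have h1 : (Finset.univ.filter fun m'' => h m'' = h m ∧ g m'' = g m)
        = (Finset.univ.filter fun m'' => g m'' = g m) := by
      ext m''
      simp only [Finset.mem_filter, Finset.mem_univ, true_and]
      exact ⟨fun hp => hp.2, fun hg => ⟨hdet m'' m hg, hg⟩⟩
    have h2 := hind (h m) (g m)
    rw [pr, pr, pr] at h2
    rw [filter_pair, h1] at h2
    have hgpos : (0:ℝ) < ((Finset.univ.filter fun m'' => g m'' = g m).card : ℝ) := by
      have : 0 < (Finset.univ.filter fun m'' => g m'' = g m).card :=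
        Finset.card_pos.2 ⟨m, by simp⟩
      exact_mod_cast this
    have hN := cardM_pos (M := M)
    have hch : ((Finset.univ.filter fun m'' => h m'' = h m).card : ℝ) = Fintype.card M := by
      field_simp at h2
      apply mul_left_cancel₀ (ne_of_gt hgpos)
      apply mul_right_cancel₀ (ne_of_gt hN)
      linear_combination (-(((Finset.univ.filter fun m'' => g m'' = g m).card : ℝ) * (Fintype.card M : ℝ))) * h2
    have huniv : (Finset.univ.filter fun m'' => h m'' = h m) = Finset.univ := by
      apply Finset.eq_univ_of_card
      exact_mod_cast hch
    have hm' : m' ∈ Finset.univ.filter fun m'' => h m'' = h m := by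
      rw [huniv]; exact Finset.mem_univ m'
    exact (Finset.mem_filter.1 hm').2
  intro m₁ m₂
  exact main m₂ m₁

lemma ent_const {f : M → A} (h : ∀ m₁ m₂, f m₁ = f m₂) : ent f = 0 := by
  obtain ⟨m0⟩ := (inferInstance : Nonempty M)
  have himg : Finset.univ.image f = {f m0} := by
    ext a
    simp only [Finset.mem_image, Finset.mem_univ, true_and, Finset.mem_singleton]
    constructor
    · rintro ⟨m, rfl⟩; exact h m m0
    · intro ha; exact ⟨m0, ha.symm⟩
  have hone : pr f (f m0) = 1 := by
    have huniv : (Finset.univ.filter fun m => f m = f m0) = Finset.univ :=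
      Finset.eq_univ_of_forall fun m => by simp [h m m0]
    rw [pr, huniv, Finset.card_univ]
    exact div_self (ne_of_gt (cardM_pos (M := M)))
  rw [ent_eq, himg, Finset.sum_singleton, hone]
  simp [Real.negMulLog]
end AuxEnt

/-- The greedy inequality: for any serializable code on the 2-cycle with
`H(a) + H(b) > 0`, one has `H(a) + H(b) > H(a|x) + H(b|y)`. -/
theorem stmt9 {M X Y A B : Type*} [Fintype M] [Nonempty M]
    [DecidableEq X] [DecidableEq Y] [DecidableEq A] [DecidableEq B]
    (fx : M → X) (fy : M → Y) (fa : M → A) (fb : M → B)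
    (hser : Serializable2Cycle fx fy fa fb)
    (hpos : 0 < ent fa + ent fb) :
    (ent (fun m => (fa m, fx m)) - ent fx) + (ent (fun m => (fb m, fy m)) - ent fy)
      < ent fa + ent fb := by
  obtain ⟨k, SA, SB, Fa, Fb, hfa, hfb, hFa, hFb⟩ := hser
  by_cases hIa : Indep fa fx
  · by_cases hIb : Indep fb fy
    · exfalso
      have key : ∀ n : ℕ, ∀ j : Fin k, (j : ℕ) = n →
          (∀ m₁ m₂, Fa j m₁ = Fa j m₂) ∧ (∀ m₁ m₂, Fb j m₁ = Fb j m₂) := by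
        intro n
        induction n using Nat.strong_induction_on with
        | _ n ih =>
          intro j hj
          constructor
          · letI := Classical.decEq (SA j)
            refine const_of_indep (g := fx) ?_ ?_
            · exact indep_comp hIa (fun m₁ m₂ hf => (hfa m₁ m₂).1 hf j)
            · intro m₁ m₂ hx
              refine hFa j m₁ m₂ hx ?_
              intro i hi
              exact (ih i.1 (by rw [← hj]; exact hi) i rfl).2 m₁ m₂
          · letI := Classical.decEq (SB j)
            refine const_of_indep (g := fy) ?_ ?_
            · exact indep_comp hIb (fun m₁ m₂ hf => (hfb m₁ m₂).1 hf j)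
            · intro m₁ m₂ hy
              refine hFb j m₁ m₂ hy ?_
              intro i hi
              exact (ih i.1 (by rw [← hj]; exact hi) i rfl).1 m₁ m₂
      have hca : ∀ m₁ m₂, fa m₁ = fa m₂ := fun m₁ m₂ =>
        (hfa m₁ m₂).2 fun i => (key i.1 i rfl).1 m₁ m₂
      have hcb : ∀ m₁ m₂, fb m₁ = fb m₂ := fun m₁ m₂ =>
        (hfb m₁ m₂).2 fun i => (key i.1 i rfl).2 m₁ m₂
      rw [ent_const hca, ent_const hcb] at hpos
      norm_num at hpos
    · have h1 := ent_pair_lt fb fy hIb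
      have h2 := ent_pair_le fa fx
      linarith
  · have h1 := ent_pair_lt fa fx hIa
    have h2 := ent_pair_le fb fy
    linarith
end

section
/- For random variables (edge functions) on the 2-cycle satisfying the downstreamness relations H(abx) = H(bx) and H(aby) = H(ay) together with Shannon's inequalities, one has H(b|x) ≥ H(a|x). -/
lemma ent_eq_sum {M : Type*} [Fintype M] {A : Type*} [DecidableEq A] (f : M → A) :
    ent f = ∑ m : M, -(Real.log (((Finset.univ.filter fun m' => f m' = f m).card : ℝ) /
      (Fintype.card M : ℝ)) / (Fintype.card M : ℝ)) := by
  have := Finset.sum_comp (s := (Finset.univ : Finset M))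
    (fun a : A => -(Real.log (((Finset.univ.filter fun m' => f m' = a).card : ℝ) /
      (Fintype.card M : ℝ)) / (Fintype.card M : ℝ))) f
  rw [this, ent, ← Finset.sum_neg_distrib]
  refine Finset.sum_congr rfl fun a _ => ?_
  simp only [nsmul_eq_mul]
  ring

lemma ent_mono {M : Type*} [Fintype M] {A B : Type*} [DecidableEq A]
    [DecidableEq B] (f : M → A) (h : A → B) : ent (fun m => h (f m)) ≤ ent f := by
  rw [ent_eq_sum, ent_eq_sum]
  refine Finset.sum_le_sum fun m _ => ?_
  have : Nonempty M := ⟨m⟩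
  have hN : (0:ℝ) < (Fintype.card M : ℝ) := by
    exact_mod_cast Fintype.card_pos
  have hsub : (Finset.univ.filter fun m' => f m' = f m) ⊆
      (Finset.univ.filter fun m' => h (f m') = h (f m)) := by
    intro x hx
    simp only [Finset.mem_filter, Finset.mem_univ, true_and] at hx ⊢
    rw [hx]
  have hpos : 0 < (Finset.univ.filter fun m' => f m' = f m).card :=
    Finset.card_pos.2 ⟨m, by simp⟩
  have hle : ((Finset.univ.filter fun m' => f m' = f m).card : ℝ) ≤
      ((Finset.univ.filter fun m' => h (f m') = h (f m)).card : ℝ) := by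
    exact_mod_cast Finset.card_le_card hsub
  have hlog : Real.log (((Finset.univ.filter fun m' => f m' = f m).card : ℝ) / (Fintype.card M : ℝ))
      ≤ Real.log (((Finset.univ.filter fun m' => h (f m') = h (f m)).card : ℝ) / (Fintype.card M : ℝ)) := by
    apply Real.log_le_log
    · positivity
    · gcongr
  gcongr


/-- Under downstreamness (`H(abx) = H(bx)` and `H(aby) = H(ay)`) one has
`H(b|x) ≥ H(a|x)`. -/
theorem stmt10 {M X Y A B : Type*} [Fintype M] [Nonempty M]
    [DecidableEq X] [DecidableEq Y] [DecidableEq A] [DecidableEq B]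
    (fx : M → X) (fy : M → Y) (fa : M → A) (fb : M → B)
    (hdsa : ent (fun m => (fa m, fb m, fx m)) = ent (fun m => (fb m, fx m)))
    (hdsb : ent (fun m => (fa m, fb m, fy m)) = ent (fun m => (fa m, fy m))) :
    ent (fun m => (fa m, fx m)) - ent fx ≤ ent (fun m => (fb m, fx m)) - ent fx := by
  have h1 : ent (fun m => (fa m, fx m)) ≤ ent (fun m => (fa m, fb m, fx m)) :=
    ent_mono (fun m => (fa m, fb m, fx m)) (fun p => (p.1, p.2.2))
  linarith [h1, hdsa]
end

section
/- For discrete random variables x, y, a, b satisfying downstreamness (H(abx) = H(bx), H(aby) = H(ay)) and Shannon's inequalities, the upper bound H(a) ≤ H(a|x) + H(a|y) + I(x;y) holds, where I(x;y) = H(x) + H(y) - H(xy), given additionally that H(axy) = H(xy). -/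
namespace Stmt11Aux

open Finset

variable {M : Type*} [Fintype M]

/-- Fiber of `f` over `a`. -/
def fib {A : Type*} [DecidableEq A] (f : M → A) (a : A) : Finset M :=
  Finset.univ.filter fun m => f m = a

lemma mem_fib_self {A : Type*} [DecidableEq A] (f : M → A) (m : M) : m ∈ fib f (f m) := by
  simp [fib]

lemma fib_card_pos {A : Type*} [DecidableEq A] (f : M → A) (m : M) :
    0 < (fib f (f m)).card :=
  Finset.card_pos.2 ⟨m, mem_fib_self f m⟩

lemma sum_fib_card {A : Type*} [DecidableEq A] (f : M → A) :
    ∑ a ∈ Finset.univ.image f, (fib f a).card = Fintype.card M := by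
  rw [← Finset.card_univ]
  exact (Finset.card_eq_sum_card_fiberwise (fun m _ => Finset.mem_image_of_mem f (Finset.mem_univ m))).symm

lemma sum_log_fib {A : Type*} [DecidableEq A] (f : M → A) :
    ∑ m, Real.log ((fib f (f m)).card) =
      ∑ a ∈ Finset.univ.image f, ((fib f a).card : ℝ) * Real.log ((fib f a).card) := by
  rw [← Finset.sum_fiberwise_of_maps_to (fun m _ => Finset.mem_image_of_mem f (Finset.mem_univ m))
      (fun m => Real.log ((fib f (f m)).card))]
  refine Finset.sum_congr rfl fun a _ => ?_
  have : ∀ m ∈ Finset.univ.filter fun m => f m = a,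
      Real.log ((fib f (f m)).card) = Real.log ((fib f a).card) := by
    intro m hm
    rw [Finset.mem_filter] at hm
    rw [hm.2]
  rw [Finset.sum_congr rfl this, Finset.sum_const, nsmul_eq_mul]
  rfl

lemma ent_eq [Nonempty M] {A : Type*} [DecidableEq A] (f : M → A) :
    ent f = Real.log (Fintype.card M) -
      (∑ m, Real.log ((fib f (f m)).card)) / (Fintype.card M : ℝ) := by
  have hN : (0 : ℝ) < (Fintype.card M : ℝ) := by positivity
  have hsum : ∑ a ∈ Finset.univ.image f, ((fib f a).card : ℝ) = (Fintype.card M : ℝ) := by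
    rw [← Nat.cast_sum, sum_fib_card]
  rw [ent, sum_log_fib]
  have key : ∀ a ∈ Finset.univ.image f,
      (((Finset.univ.filter fun m => f m = a).card : ℝ) / (Fintype.card M : ℝ)) *
        Real.log (((Finset.univ.filter fun m => f m = a).card : ℝ) / (Fintype.card M : ℝ))
      = ((fib f a).card : ℝ) * Real.log ((fib f a).card) / (Fintype.card M : ℝ)
        - (Real.log (Fintype.card M) / (Fintype.card M : ℝ)) * ((fib f a).card : ℝ) := by
    intro a ha
    obtain ⟨m, _, hm⟩ := Finset.mem_image.1 ha
    have hpos : (0 : ℝ) < ((fib f a).card : ℝ) := by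
      exact_mod_cast Finset.card_pos.2 ⟨m, by simp [fib, hm]⟩
    show ((fib f a).card : ℝ) / _ * Real.log (((fib f a).card : ℝ) / _) = _
    rw [Real.log_div hpos.ne' hN.ne']
    ring
  rw [Finset.sum_congr rfl key, Finset.sum_sub_distrib, ← Finset.sum_div, ← Finset.mul_sum, hsum]
  field_simp
  ring

variable {A X Y : Type*} [DecidableEq A] [DecidableEq X] [DecidableEq Y]

lemma fib_pair (fa : M → A) (fx : M → X) (a : A) (x : X) :
    fib (fun m => (fa m, fx m)) (a, x) = (fib fa a).filter fun m => fx m = x := by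
  ext m; simp [fib, Prod.ext_iff, and_assoc]

lemma sum_pair_card (fa : M → A) (fx : M → X) (a : A) :
    ∑ x ∈ Finset.univ.image fx, ((fib (fun m => (fa m, fx m)) (a, x)).card : ℝ)
      = ((fib fa a).card : ℝ) := by
  have h := Finset.card_eq_sum_card_fiberwise
    (f := fx) (s := fib fa a) (t := Finset.univ.image fx)
    (fun m _ => Finset.mem_image_of_mem fx (Finset.mem_univ m))
  rw [← Nat.cast_sum, h]
  push_cast
  exact Finset.sum_congr rfl fun x _ => by rw [fib_pair]

/-- The key counting bound: `∑_m n_ax n_ay / (n_a n_axy) ≤ |M|`. -/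
lemma sum_ratio_le (fa : M → A) (fx : M → X) (fy : M → Y) :
    ∑ m, ((fib (fun m => (fa m, fx m)) (fa m, fx m)).card : ℝ)
          * ((fib (fun m => (fa m, fy m)) (fa m, fy m)).card : ℝ)
          / (((fib fa (fa m)).card : ℝ)
              * ((fib (fun m => (fa m, fx m, fy m)) (fa m, fx m, fy m)).card : ℝ))
      ≤ (Fintype.card M : ℝ) := by
  set π : M → A × X × Y := fun m => (fa m, fx m, fy m) with hπ
  set T : A × X × Y → ℝ := fun v =>
    ((fib (fun m => (fa m, fx m)) (v.1, v.2.1)).card : ℝ)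
      * ((fib (fun m => (fa m, fy m)) (v.1, v.2.2)).card : ℝ)
      / (((fib fa v.1).card : ℝ) * ((fib π v).card : ℝ)) with hT
  have hstep : ∑ m, T (π m)
      = ∑ v ∈ Finset.univ.image π, (fib π v).card • T v := by
    rw [Finset.sum_comp T π]
    rfl
  have hfibcard : ∀ v ∈ Finset.univ.image π, (fib π v).card • T v
      = ((fib (fun m => (fa m, fx m)) (v.1, v.2.1)).card : ℝ)
        * ((fib (fun m => (fa m, fy m)) (v.1, v.2.2)).card : ℝ) / ((fib fa v.1).card : ℝ) := by
    intro v hv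
    obtain ⟨m, _, hm⟩ := Finset.mem_image.1 hv
    have hpos : (0 : ℝ) < ((fib π v).card : ℝ) := by
      exact_mod_cast Finset.card_pos.2 ⟨m, by simp [fib, hm]⟩
    have hapos : (0 : ℝ) < ((fib fa v.1).card : ℝ) := by
      refine ?_
      have : m ∈ fib fa v.1 := by
        simp only [fib, Finset.mem_filter, Finset.mem_univ, true_and]
        rw [← hm]
      exact_mod_cast Finset.card_pos.2 ⟨m, this⟩
    rw [nsmul_eq_mul, hT]
    field_simp
  calc ∑ m, ((fib (fun m => (fa m, fx m)) (fa m, fx m)).card : ℝ)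
          * ((fib (fun m => (fa m, fy m)) (fa m, fy m)).card : ℝ)
          / (((fib fa (fa m)).card : ℝ)
              * ((fib (fun m => (fa m, fx m, fy m)) (fa m, fx m, fy m)).card : ℝ))
      = ∑ m, T (π m) := rfl
    _ = ∑ v ∈ Finset.univ.image π, (fib π v).card • T v := hstep
    _ = ∑ v ∈ Finset.univ.image π,
          ((fib (fun m => (fa m, fx m)) (v.1, v.2.1)).card : ℝ)
          * ((fib (fun m => (fa m, fy m)) (v.1, v.2.2)).card : ℝ) / ((fib fa v.1).card : ℝ) :=
        Finset.sum_congr rfl hfibcard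
    _ ≤ ∑ v ∈ (Finset.univ.image fa) ×ˢ ((Finset.univ.image fx) ×ˢ (Finset.univ.image fy)),
          ((fib (fun m => (fa m, fx m)) (v.1, v.2.1)).card : ℝ)
          * ((fib (fun m => (fa m, fy m)) (v.1, v.2.2)).card : ℝ) / ((fib fa v.1).card : ℝ) := by
        refine Finset.sum_le_sum_of_subset_of_nonneg ?_ fun v _ _ => by positivity
        intro v hv
        obtain ⟨m, _, hm⟩ := Finset.mem_image.1 hv
        rw [← hm]
        exact Finset.mem_product.2 ⟨Finset.mem_image_of_mem fa (Finset.mem_univ m),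
          Finset.mem_product.2 ⟨Finset.mem_image_of_mem fx (Finset.mem_univ m),
            Finset.mem_image_of_mem fy (Finset.mem_univ m)⟩⟩
    _ = ∑ a ∈ Finset.univ.image fa, ∑ x ∈ Finset.univ.image fx, ∑ y ∈ Finset.univ.image fy,
          ((fib (fun m => (fa m, fx m)) (a, x)).card : ℝ)
          * ((fib (fun m => (fa m, fy m)) (a, y)).card : ℝ) / ((fib fa a).card : ℝ) := by
        rw [Finset.sum_product]
        exact Finset.sum_congr rfl fun a _ => by rw [Finset.sum_product]
    _ = ∑ a ∈ Finset.univ.image fa, ((fib fa a).card : ℝ) := by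
        refine Finset.sum_congr rfl fun a ha => ?_
        obtain ⟨m, _, hm⟩ := Finset.mem_image.1 ha
        have hapos : (0 : ℝ) < ((fib fa a).card : ℝ) := by
          exact_mod_cast Finset.card_pos.2 ⟨m, by simp [fib, hm]⟩
        calc ∑ x ∈ Finset.univ.image fx, ∑ y ∈ Finset.univ.image fy,
              ((fib (fun m => (fa m, fx m)) (a, x)).card : ℝ)
              * ((fib (fun m => (fa m, fy m)) (a, y)).card : ℝ) / ((fib fa a).card : ℝ)
            = (∑ x ∈ Finset.univ.image fx, ((fib (fun m => (fa m, fx m)) (a, x)).card : ℝ))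
              * (∑ y ∈ Finset.univ.image fy, ((fib (fun m => (fa m, fy m)) (a, y)).card : ℝ))
              / ((fib fa a).card : ℝ) := by
              rw [Finset.sum_mul, Finset.sum_div]
              refine Finset.sum_congr rfl fun x _ => ?_
              rw [Finset.mul_sum, Finset.sum_div]
          _ = ((fib fa a).card : ℝ) * ((fib fa a).card : ℝ) / ((fib fa a).card : ℝ) := by
              rw [sum_pair_card fa fx a, sum_pair_card fa fy a]
          _ = ((fib fa a).card : ℝ) := by field_simp
    _ = (Fintype.card M : ℝ) := by rw [← Nat.cast_sum, sum_fib_card]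

lemma log_aux {p q r s : ℝ} (hp : 0 < p) (hq : 0 < q) (hr : 0 < r) (hs : 0 < s) :
    Real.log p + Real.log q - Real.log r - Real.log s ≤ p * q / (r * s) - 1 := by
  have h1 : Real.log (p * q / (r * s)) ≤ p * q / (r * s) - 1 :=
    Real.log_le_sub_one_of_pos (div_pos (mul_pos hp hq) (mul_pos hr hs))
  rw [Real.log_div (mul_pos hp hq).ne' (mul_pos hr hs).ne',
      Real.log_mul hp.ne' hq.ne', Real.log_mul hr.ne' hs.ne'] at h1
  linarith

/-- Submodularity in the form `S_ax + S_ay ≤ S_a + S_axy` for sums of logs of fiber sizes. -/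
lemma core (fa : M → A) (fx : M → X) (fy : M → Y) :
    (∑ m, Real.log ((fib (fun m => (fa m, fx m)) (fa m, fx m)).card))
      + (∑ m, Real.log ((fib (fun m => (fa m, fy m)) (fa m, fy m)).card))
    ≤ (∑ m, Real.log ((fib fa (fa m)).card))
      + (∑ m, Real.log ((fib (fun m => (fa m, fx m, fy m)) (fa m, fx m, fy m)).card)) := by
  have hlog : ∀ m : M,
      Real.log ((fib (fun m => (fa m, fx m)) (fa m, fx m)).card)
      + Real.log ((fib (fun m => (fa m, fy m)) (fa m, fy m)).card)
      - Real.log ((fib fa (fa m)).card)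
      - Real.log ((fib (fun m => (fa m, fx m, fy m)) (fa m, fx m, fy m)).card)
      ≤ ((fib (fun m => (fa m, fx m)) (fa m, fx m)).card : ℝ)
          * ((fib (fun m => (fa m, fy m)) (fa m, fy m)).card : ℝ)
          / (((fib fa (fa m)).card : ℝ)
              * ((fib (fun m => (fa m, fx m, fy m)) (fa m, fx m, fy m)).card : ℝ)) - 1 := by
    intro m
    exact log_aux
      (by exact_mod_cast fib_card_pos (fun m => (fa m, fx m)) m)
      (by exact_mod_cast fib_card_pos (fun m => (fa m, fy m)) m)
      (by exact_mod_cast fib_card_pos fa m)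
      (by exact_mod_cast fib_card_pos (fun m => (fa m, fx m, fy m)) m)
  have hsum := Finset.sum_le_sum fun m (_ : m ∈ Finset.univ) => hlog m
  rw [Finset.sum_sub_distrib, Finset.sum_sub_distrib, Finset.sum_add_distrib,
      Finset.sum_sub_distrib] at hsum
  have hratio := sum_ratio_le fa fx fy
  have hcard : ∑ _m : M, (1 : ℝ) = (Fintype.card M : ℝ) := by
    simp [Finset.card_univ]
  linarith

end Stmt11Aux

/-- Under downstreamness and `H(axy) = H(xy)`,
`H(a) ≤ H(a|x) + H(a|y) + I(x;y)`. -/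
theorem stmt11 {M X Y A B : Type*} [Fintype M] [Nonempty M]
    [DecidableEq X] [DecidableEq Y] [DecidableEq A] [DecidableEq B]
    (fx : M → X) (fy : M → Y) (fa : M → A) (fb : M → B)
    (hdsa : ent (fun m => (fa m, fb m, fx m)) = ent (fun m => (fb m, fx m)))
    (hdsb : ent (fun m => (fa m, fb m, fy m)) = ent (fun m => (fa m, fy m)))
    (haxy : ent (fun m => (fa m, fx m, fy m)) = ent (fun m => (fx m, fy m))) :
    ent fa ≤ (ent (fun m => (fa m, fx m)) - ent fx)
        + (ent (fun m => (fa m, fy m)) - ent fy)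
        + (ent fx + ent fy - ent (fun m => (fx m, fy m))) := by
  have hN : (0 : ℝ) < (Fintype.card M : ℝ) := by positivity
  have hcore := Stmt11Aux.core fa fx fy
  have h1 := Stmt11Aux.ent_eq fa
  have h2 := Stmt11Aux.ent_eq (fun m => (fa m, fx m))
  have h3 := Stmt11Aux.ent_eq (fun m => (fa m, fy m))
  have h4 := Stmt11Aux.ent_eq (fun m => (fa m, fx m, fy m))
  have hdiv : (∑ m, Real.log ((Stmt11Aux.fib (fun m => (fa m, fx m)) (fa m, fx m)).card))
        / (Fintype.card M : ℝ)
      + (∑ m, Real.log ((Stmt11Aux.fib (fun m => (fa m, fy m)) (fa m, fy m)).card))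
        / (Fintype.card M : ℝ)
      ≤ (∑ m, Real.log ((Stmt11Aux.fib fa (fa m)).card)) / (Fintype.card M : ℝ)
      + (∑ m, Real.log ((Stmt11Aux.fib (fun m => (fa m, fx m, fy m)) (fa m, fx m, fy m)).card))
        / (Fintype.card M : ℝ) := by
    rw [← add_div, ← add_div, div_le_div_iff_of_pos_right hN]
    exact hcore
  rw [← haxy]
  rw [h1, h2, h3, h4] at *
  linarith
end

section
/- For discrete random variables x, y, a, b with H(axy) = H(bxy) = H(abxy) = H(xy) (all edge functions determined by the sources) and satisfying downstreamness H(abx) = H(bx), H(aby) = H(ay), the inequality H(ab) ≤ H(b|x) + H(a|y) + I(x;y) holds. -/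
namespace EntAux

open Finset

set_option linter.unusedSectionVars false

variable {M : Type*} [Fintype M] [Nonempty M]

def cnt {A : Type*} [DecidableEq A] (f : M → A) (m : M) : ℕ :=
  (Finset.univ.filter fun m' => f m' = f m).card

lemma cnt_pos {A : Type*} [DecidableEq A] (f : M → A) (m : M) : 0 < cnt f m :=
  Finset.card_pos.2 ⟨m, by simp [cnt]⟩

lemma ent_eq {A : Type*} [DecidableEq A] (f : M → A) :
    ent f = -(∑ m : M, Real.log ((cnt f m : ℝ) / (Fintype.card M : ℝ))) / (Fintype.card M : ℝ) := by
  have h := Finset.sum_comp (s := (univ : Finset M))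
    (fun a => Real.log (((Finset.univ.filter fun m => f m = a).card : ℝ) / (Fintype.card M : ℝ))) f
  unfold ent cnt
  rw [h, neg_div, Finset.sum_div]
  congr 1
  apply Finset.sum_congr rfl
  intro a _
  rw [nsmul_eq_mul]
  ring

lemma cnt_comp {A B : Type*} [DecidableEq A] [DecidableEq B] {j : A → B}
    (hj : Function.Injective j) (f : M → A) (m : M) :
    cnt (fun m => j (f m)) m = cnt f m := by
  unfold cnt
  congr 1
  apply Finset.filter_congr
  intro m' _
  simp [hj.eq_iff]

lemma ent_comp {A B : Type*} [DecidableEq A] [DecidableEq B] {j : A → B}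
    (hj : Function.Injective j) (f : M → A) :
    ent (fun m => j (f m)) = ent f := by
  rw [ent_eq, ent_eq]
  congr 2
  apply Finset.sum_congr rfl
  intro m _
  rw [cnt_comp hj]

/-- key combinatorial bound -/
lemma sum_ratio_le {A B C : Type*} [DecidableEq A] [DecidableEq B] [DecidableEq C]
    (f : M → A) (g : M → B) (h : M → C) :
    ∑ m : M, ((cnt (fun m => (f m, g m)) m : ℝ) * (cnt (fun m => (f m, h m)) m : ℝ)) /
      ((cnt (fun m => (f m, g m, h m)) m : ℝ) * (cnt f m : ℝ)) ≤ (Fintype.card M : ℝ) := by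
  classical
  set cA : A × B → ℕ := fun p => (univ.filter fun m => (f m, g m) = p).card with hcA
  set cB : A × C → ℕ := fun p => (univ.filter fun m => (f m, h m) = p).card with hcB
  set cF : A × B × C → ℕ := fun v => (univ.filter fun m => (f m, g m, h m) = v).card with hcF
  set c : A → ℕ := fun a => (univ.filter fun m => f m = a).card with hc
  set T : A × B × C → ℝ := fun v => ((cA (v.1, v.2.1) : ℝ) * (cB (v.1, v.2.2) : ℝ)) /
      ((cF v : ℝ) * (c v.1 : ℝ)) with hT
  have hrw : ∀ m : M,
      ((cnt (fun m => (f m, g m)) m : ℝ) * (cnt (fun m => (f m, h m)) m : ℝ)) /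
      ((cnt (fun m => (f m, g m, h m)) m : ℝ) * (cnt f m : ℝ)) = T ((fun m => (f m, g m, h m)) m) := by
    intro m; simp only [hT, cnt, hcA, hcB, hcF, hc]
  have hcard : Fintype.card M = ∑ a ∈ univ.image f, c a := by
    simp only [hc]
    rw [← Finset.card_univ]
    exact Finset.card_eq_sum_card_fiberwise
      (fun x _ => Finset.mem_image_of_mem f (Finset.mem_univ x))
  have hgN : ∀ a : A, c a = ∑ b ∈ univ.image g, cA (a, b) := by
    intro a
    simp only [hc, hcA]
    rw [Finset.card_eq_sum_card_fiberwise (s := univ.filter fun m => f m = a) (f := g)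
      (t := univ.image g) (fun x _ => Finset.mem_image_of_mem g (Finset.mem_univ x))]
    apply Finset.sum_congr rfl
    intro b _
    rw [Finset.filter_filter]
    congr 1
    apply Finset.filter_congr
    intro m _
    simp [Prod.ext_iff, and_comm]
  have hhN : ∀ a : A, c a = ∑ b ∈ univ.image h, cB (a, b) := by
    intro a
    simp only [hc, hcB]
    rw [Finset.card_eq_sum_card_fiberwise (s := univ.filter fun m => f m = a) (f := h)
      (t := univ.image h) (fun x _ => Finset.mem_image_of_mem h (Finset.mem_univ x))]
    apply Finset.sum_congr rfl
    intro b _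
    rw [Finset.filter_filter]
    congr 1
    apply Finset.filter_congr
    intro m _
    simp [Prod.ext_iff, and_comm]
  calc ∑ m : M, ((cnt (fun m => (f m, g m)) m : ℝ) * (cnt (fun m => (f m, h m)) m : ℝ)) /
      ((cnt (fun m => (f m, g m, h m)) m : ℝ) * (cnt f m : ℝ))
      = ∑ m : M, T ((fun m => (f m, g m, h m)) m) := by
        exact Finset.sum_congr rfl fun m _ => hrw m
    _ = ∑ v ∈ univ.image (fun m => (f m, g m, h m)), cF v • T v := by
        rw [Finset.sum_comp T (fun m => (f m, g m, h m))]
    _ = ∑ v ∈ univ.image (fun m => (f m, g m, h m)),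
          ((cA (v.1, v.2.1) : ℝ) * (cB (v.1, v.2.2) : ℝ)) / (c v.1 : ℝ) := by
        apply Finset.sum_congr rfl
        intro v hv
        obtain ⟨m, _, hm⟩ := Finset.mem_image.1 hv
        have hpos : (0:ℝ) < cF v := by
          have : m ∈ univ.filter fun m' => (f m', g m', h m') = v := by simp [hm]
          exact_mod_cast Finset.card_pos.2 ⟨m, this⟩
        simp only [nsmul_eq_mul, hT]
        rw [div_mul_eq_div_div, mul_div_assoc']
        congr 1
        rw [mul_comm, div_mul_cancel₀ _ (ne_of_gt hpos)]
    _ ≤ ∑ v ∈ (univ.image f) ×ˢ ((univ.image g) ×ˢ (univ.image h)),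
          ((cA (v.1, v.2.1) : ℝ) * (cB (v.1, v.2.2) : ℝ)) / (c v.1 : ℝ) := by
        apply Finset.sum_le_sum_of_subset_of_nonneg
        · intro v hv
          obtain ⟨m, _, hm⟩ := Finset.mem_image.1 hv
          subst hm
          simp [Finset.mem_product]
        · intro v _ _
          positivity
    _ = ∑ a ∈ univ.image f, ((c a : ℝ) * (c a : ℝ)) / (c a : ℝ) := by
        rw [Finset.sum_product]
        apply Finset.sum_congr rfl
        intro a _
        rw [Finset.sum_product]
        dsimp only
        calc ∑ b ∈ univ.image g, ∑ cc ∈ univ.image h,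
              ((cA (a, b) : ℝ) * (cB (a, cc) : ℝ)) / (c a : ℝ)
            = (∑ b ∈ univ.image g, (cA (a, b) : ℝ)) * (∑ cc ∈ univ.image h, (cB (a, cc) : ℝ))
                / (c a : ℝ) := by
              rw [Finset.sum_mul_sum, Finset.sum_div]
              apply Finset.sum_congr rfl
              intro b _
              rw [Finset.sum_div]
          _ = ((c a : ℝ) * (c a : ℝ)) / (c a : ℝ) := by
              rw [show (∑ b ∈ univ.image g, (cA (a, b) : ℝ)) = (c a : ℝ) by
                    rw [hgN a]; push_cast; rfl,
                  show (∑ b ∈ univ.image h, (cB (a, b) : ℝ)) = (c a : ℝ) by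
                    rw [hhN a]; push_cast; rfl]
    _ ≤ ∑ a ∈ univ.image f, (c a : ℝ) := by
        apply Finset.sum_le_sum
        intro a ha
        obtain ⟨m, _, hm⟩ := Finset.mem_image.1 ha
        have hpos : (0:ℝ) < c a := by
          have : m ∈ univ.filter fun m' => f m' = a := by simp [hm]
          exact_mod_cast Finset.card_pos.2 ⟨m, this⟩
        rw [mul_div_assoc, div_self (ne_of_gt hpos), mul_one]
    _ = (Fintype.card M : ℝ) := by
        rw [hcard]; push_cast; rfl


lemma submodular {A B C : Type*} [DecidableEq A] [DecidableEq B] [DecidableEq C]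
    (f : M → A) (g : M → B) (h : M → C) :
    ent (fun m => (f m, g m, h m)) + ent f ≤
      ent (fun m => (f m, g m)) + ent (fun m => (f m, h m)) := by
  have hMpos : (0:ℝ) < (Fintype.card M : ℝ) := by
    exact_mod_cast Fintype.card_pos
  have key : ∑ m : M,
      (Real.log ((cnt (fun m => (f m, g m)) m : ℝ) / (Fintype.card M : ℝ))
        + Real.log ((cnt (fun m => (f m, h m)) m : ℝ) / (Fintype.card M : ℝ)))
    ≤ ∑ m : M,
      (Real.log ((cnt (fun m => (f m, g m, h m)) m : ℝ) / (Fintype.card M : ℝ))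
        + Real.log ((cnt f m : ℝ) / (Fintype.card M : ℝ))) := by
    have h1 : ∀ m : M,
        (Real.log ((cnt (fun m => (f m, g m)) m : ℝ) / (Fintype.card M : ℝ))
          + Real.log ((cnt (fun m => (f m, h m)) m : ℝ) / (Fintype.card M : ℝ)))
        - (Real.log ((cnt (fun m => (f m, g m, h m)) m : ℝ) / (Fintype.card M : ℝ))
          + Real.log ((cnt f m : ℝ) / (Fintype.card M : ℝ)))
        ≤ ((cnt (fun m => (f m, g m)) m : ℝ) * (cnt (fun m => (f m, h m)) m : ℝ)) /
          ((cnt (fun m => (f m, g m, h m)) m : ℝ) * (cnt f m : ℝ)) - 1 := by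
      intro m
      have p1 : (0:ℝ) < (cnt (fun m => (f m, g m)) m : ℝ) := by exact_mod_cast cnt_pos _ m
      have p2 : (0:ℝ) < (cnt (fun m => (f m, h m)) m : ℝ) := by exact_mod_cast cnt_pos _ m
      have p3 : (0:ℝ) < (cnt (fun m => (f m, g m, h m)) m : ℝ) := by exact_mod_cast cnt_pos _ m
      have p4 : (0:ℝ) < (cnt f m : ℝ) := by exact_mod_cast cnt_pos f m
      have hlog :
          (Real.log ((cnt (fun m => (f m, g m)) m : ℝ) / (Fintype.card M : ℝ))
            + Real.log ((cnt (fun m => (f m, h m)) m : ℝ) / (Fintype.card M : ℝ)))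
          - (Real.log ((cnt (fun m => (f m, g m, h m)) m : ℝ) / (Fintype.card M : ℝ))
            + Real.log ((cnt f m : ℝ) / (Fintype.card M : ℝ)))
          = Real.log (((cnt (fun m => (f m, g m)) m : ℝ) * (cnt (fun m => (f m, h m)) m : ℝ)) /
            ((cnt (fun m => (f m, g m, h m)) m : ℝ) * (cnt f m : ℝ))) := by
        rw [Real.log_div p1.ne' hMpos.ne', Real.log_div p2.ne' hMpos.ne',
          Real.log_div p3.ne' hMpos.ne', Real.log_div p4.ne' hMpos.ne',
          Real.log_div (by positivity) (by positivity),
          Real.log_mul p1.ne' p2.ne', Real.log_mul p3.ne' p4.ne']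
        ring
      rw [hlog]
      exact Real.log_le_sub_one_of_pos (by positivity)
    have h2 := Finset.sum_le_sum (fun m (_ : m ∈ (univ : Finset M)) => h1 m)
    rw [Finset.sum_sub_distrib, Finset.sum_sub_distrib] at h2
    have h3 := sum_ratio_le f g h
    have h4 : ∑ _m : M, (1:ℝ) = (Fintype.card M : ℝ) := by
      simp [Finset.card_univ]
    linarith
  rw [Finset.sum_add_distrib, Finset.sum_add_distrib] at key
  rw [ent_eq, ent_eq, ent_eq, ent_eq]
  rw [← add_div, ← add_div, div_le_div_iff_of_pos_right hMpos]
  linarith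

end EntAux

/-- With all edge functions determined by the sources and downstreamness,
`H(ab) ≤ H(b|x) + H(a|y) + I(x;y)`. -/
theorem stmt12 {M X Y A B : Type*} [Fintype M] [Nonempty M]
    [DecidableEq X] [DecidableEq Y] [DecidableEq A] [DecidableEq B]
    (fx : M → X) (fy : M → Y) (fa : M → A) (fb : M → B)
    (haxy : ent (fun m => (fa m, fx m, fy m)) = ent (fun m => (fx m, fy m)))
    (hbxy : ent (fun m => (fb m, fx m, fy m)) = ent (fun m => (fx m, fy m)))
    (habxy : ent (fun m => (fa m, fb m, fx m, fy m)) = ent (fun m => (fx m, fy m)))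
    (hdsa : ent (fun m => (fa m, fb m, fx m)) = ent (fun m => (fb m, fx m)))
    (hdsb : ent (fun m => (fa m, fb m, fy m)) = ent (fun m => (fa m, fy m))) :
    ent (fun m => (fa m, fb m)) ≤ (ent (fun m => (fb m, fx m)) - ent fx)
        + (ent (fun m => (fa m, fy m)) - ent fy)
        + (ent fx + ent fy - ent (fun m => (fx m, fy m))) := by
  classical
  have j1inj : Function.Injective (fun p : A × B × X => ((p.1, p.2.1), p.2.2)) := by
    intro p q hpq
    simpa [Prod.ext_iff, and_assoc] using hpq
  have j2inj : Function.Injective (fun p : A × B × Y => ((p.1, p.2.1), p.2.2)) := by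
    intro p q hpq
    simpa [Prod.ext_iff, and_assoc] using hpq
  have j3inj : Function.Injective
      (fun p : A × B × X × Y => ((p.1, p.2.1), (p.2.2.1, p.2.2.2))) := by
    intro p q hpq
    simpa [Prod.ext_iff, and_assoc] using hpq
  have e1 : ent (fun m => ((fa m, fb m), fx m)) = ent (fun m => (fa m, fb m, fx m)) :=
    EntAux.ent_comp j1inj (fun m => (fa m, fb m, fx m))
  have e2 : ent (fun m => ((fa m, fb m), fy m)) = ent (fun m => (fa m, fb m, fy m)) :=
    EntAux.ent_comp j2inj (fun m => (fa m, fb m, fy m))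
  have e3 : ent (fun m => ((fa m, fb m), fx m, fy m)) = ent (fun m => (fa m, fb m, fx m, fy m)) :=
    EntAux.ent_comp j3inj (fun m => (fa m, fb m, fx m, fy m))
  have sub := EntAux.submodular (fun m => (fa m, fb m)) fx fy
  linarith
end

section
/- Let Φ be a linear network code over a field F with message dual space M* of dimension d, possessing a nontrivial information vortex {W_e}, and fix an edge e with k = dim W_e < m = dim T_e. Then for every n ≥ 1, the linear serializability deficit of the n-fold repetition Φ^n is at least ((m−k)/d²)·n; more precisely, if adding extra linear functionals spanning a subspace T ⊆ M* ⊗ F^n of dimension p to every edge makes Φ^n serializable, then p ≥ ((m−k)/d²)·n. -/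
open TensorProduct

/-- For subspaces `A ⊆ V`, `C ⊆ W`, the subspace `A ⊗ C` of `V ⊗ W`:
the span of all elementary tensors `a ⊗ c` with `a ∈ A`, `c ∈ C`. -/
def tensSub (F : Type*) [Field F] {V W : Type*} [AddCommGroup V] [Module F V]
    [AddCommGroup W] [Module F W] (A : Submodule F V) (C : Submodule F W) :
    Submodule F (V ⊗[F] W) :=
  Submodule.span F {t | ∃ a ∈ A, ∃ c ∈ C, t = a ⊗ₜ[F] c}

namespace Stmt16Aux

variable {F : Type*} [Field F] {V W : Type*} [AddCommGroup V] [Module F V]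
  [AddCommGroup W] [Module F W]

lemma tmul_mem_tensSub {A : Submodule F V} {C : Submodule F W} {a : V} {c : W}
    (ha : a ∈ A) (hc : c ∈ C) : a ⊗ₜ[F] c ∈ tensSub F A C :=
  Submodule.subset_span ⟨a, ha, c, hc, rfl⟩

lemma tensSub_mono {A A' : Submodule F V} {C C' : Submodule F W} (hA : A ≤ A') (hC : C ≤ C') :
    tensSub F A C ≤ tensSub F A' C' :=
  Submodule.span_mono (by rintro t ⟨a, ha, c, hc, rfl⟩; exact ⟨a, hA ha, c, hC hc, rfl⟩)

lemma tensSub_top_right (A : Submodule F V) :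
    tensSub F A (⊤ : Submodule F W) = LinearMap.range (LinearMap.rTensor W A.subtype) := by
  apply le_antisymm
  · rw [tensSub, Submodule.span_le]
    rintro t ⟨a, ha, c, -, rfl⟩
    exact ⟨(⟨a, ha⟩ : A) ⊗ₜ[F] c, rfl⟩
  · rw [LinearMap.range_eq_map, ← TensorProduct.span_tmul_eq_top F A W, Submodule.map_span,
      Submodule.span_le]
    rintro t ⟨s, ⟨a, c, rfl⟩, rfl⟩
    exact tmul_mem_tensSub a.2 trivial

lemma tensSub_top_left (C : Submodule F W) :
    tensSub F (⊤ : Submodule F V) C = LinearMap.range (LinearMap.lTensor V C.subtype) := by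
  apply le_antisymm
  · rw [tensSub, Submodule.span_le]
    rintro t ⟨a, -, c, hc, rfl⟩
    exact ⟨a ⊗ₜ[F] (⟨c, hc⟩ : C), rfl⟩
  · rw [LinearMap.range_eq_map, ← TensorProduct.span_tmul_eq_top F V C, Submodule.map_span,
      Submodule.span_le]
    rintro t ⟨s, ⟨a, c, rfl⟩, rfl⟩
    exact tmul_mem_tensSub trivial c.2

lemma tensSub_top_right_eq_ker (A : Submodule F V) :
    tensSub F A (⊤ : Submodule F W) = LinearMap.ker (LinearMap.rTensor W A.mkQ) := by
  rw [tensSub_top_right, _root_.rTensor_mkQ]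

/-- Intersection lemma: `(A ⊗ W) ⊓ (B ⊗ W) = (A ⊓ B) ⊗ W`. -/
lemma tensSub_top_inf (A B : Submodule F V) :
    tensSub F A (⊤ : Submodule F W) ⊓ tensSub F B (⊤ : Submodule F W)
      = tensSub F (A ⊓ B) (⊤ : Submodule F W) := by
  set g := A.mkQ.prod B.mkQ with hgdef
  have hg : LinearMap.ker g = A ⊓ B := by
    rw [hgdef, LinearMap.ker_prod, Submodule.ker_mkQ, Submodule.ker_mkQ]
  have hker : LinearMap.ker (LinearMap.rTensor W g) = tensSub F (A ⊓ B) (⊤ : Submodule F W) := by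
    rw [(Module.Flat.rTensor_exact (R := F) W g.exact_subtype_ker_map).linearMap_ker_eq,
      hg, ← tensSub_top_right]
  have hsplit : LinearMap.ker (LinearMap.rTensor W g) =
      LinearMap.ker (LinearMap.rTensor W A.mkQ) ⊓ LinearMap.ker (LinearMap.rTensor W B.mkQ) := by
    ext x
    have hA : LinearMap.rTensor W A.mkQ x
        = LinearMap.rTensor W (LinearMap.fst F (V ⧸ A) (V ⧸ B)) (LinearMap.rTensor W g x) := by
      rw [← LinearMap.comp_apply, ← LinearMap.rTensor_comp, hgdef, LinearMap.fst_prod]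
    have hB : LinearMap.rTensor W B.mkQ x
        = LinearMap.rTensor W (LinearMap.snd F (V ⧸ A) (V ⧸ B)) (LinearMap.rTensor W g x) := by
      rw [← LinearMap.comp_apply, ← LinearMap.rTensor_comp, hgdef, LinearMap.snd_prod]
    simp only [Submodule.mem_inf, LinearMap.mem_ker]
    constructor
    · intro hx
      rw [hA, hB, hx, map_zero, map_zero]; exact ⟨rfl, rfl⟩
    · rintro ⟨h1, h2⟩
      set eL := TensorProduct.prodLeft F F (V ⧸ A) (V ⧸ B) W
      have hfun : eL.toLinearMap ∘ₗ LinearMap.rTensor W g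
          = ((LinearMap.rTensor W A.mkQ).prod (LinearMap.rTensor W B.mkQ)) := by
        apply TensorProduct.ext'
        intro v w
        simp [eL, hgdef]
      have : eL (LinearMap.rTensor W g x) = 0 := by
        have := congrArg (fun (L : _ →ₗ[F] _) => L x) hfun
        simp only [LinearMap.comp_apply, LinearMap.prod_apply, Function.prod] at this
        rw [LinearEquiv.coe_toLinearMap] at this
        rw [this, h1, h2]; rfl
      exact (map_eq_zero_iff eL eL.injective).mp this
  rw [tensSub_top_right_eq_ker, tensSub_top_right_eq_ker, ← hsplit, hker]

/-- comap of `A ⊗ ⊤` in `V ⊗ (W⧸Q)` under `id ⊗ mkQ` is `A ⊗ ⊤ ⊔ ⊤ ⊗ Q`. -/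
lemma comap_lTensor_mkQ (A : Submodule F V) (Q : Submodule F W) :
    Submodule.comap (LinearMap.lTensor V Q.mkQ) (tensSub F A (⊤ : Submodule F (W ⧸ Q)))
      = tensSub F A (⊤ : Submodule F W) ⊔ tensSub F (⊤ : Submodule F V) Q := by
  have hmap : Submodule.map (LinearMap.lTensor V Q.mkQ) (tensSub F A (⊤ : Submodule F W))
      = tensSub F A (⊤ : Submodule F (W ⧸ Q)) := by
    rw [tensSub, tensSub, Submodule.map_span]
    apply le_antisymm
    · rw [Submodule.span_le]
      rintro t ⟨s, ⟨a, ha, c, -, rfl⟩, rfl⟩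
      exact Submodule.subset_span ⟨a, ha, Q.mkQ c, trivial, by simp⟩
    · rw [Submodule.span_le]
      rintro t ⟨a, ha, c, -, rfl⟩
      obtain ⟨w, rfl⟩ := Submodule.mkQ_surjective Q c
      exact Submodule.subset_span ⟨a ⊗ₜ[F] w, ⟨a, ha, w, trivial, rfl⟩, by simp⟩
  have hker : LinearMap.ker (LinearMap.lTensor V Q.mkQ)
      = tensSub F (⊤ : Submodule F V) Q := by
    rw [_root_.lTensor_mkQ, ← tensSub_top_left]
  rw [← hmap, Submodule.comap_map_eq, hker]

section rank
variable [FiniteDimensional F V] [FiniteDimensional F W]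

lemma finrank_tensSub_top_right_le (A : Submodule F V) :
    Module.finrank F (tensSub F A (⊤ : Submodule F W))
      ≤ Module.finrank F A * Module.finrank F W := by
  rw [tensSub_top_right]
  calc Module.finrank F (LinearMap.range (LinearMap.rTensor W A.subtype))
      ≤ Module.finrank F (A ⊗[F] W) := LinearMap.finrank_range_le _
    _ = Module.finrank F A * Module.finrank F W := Module.finrank_tensorProduct ..

lemma finrank_tensSub_top_right_eq (A : Submodule F V) :
    Module.finrank F (tensSub F A (⊤ : Submodule F W))
      = Module.finrank F A * Module.finrank F W := by
  rw [tensSub_top_right]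
  rw [LinearMap.finrank_range_of_inj
    (Module.Flat.rTensor_preserves_injective_linearMap A.subtype A.injective_subtype)]
  exact Module.finrank_tensorProduct ..

lemma finrank_tensSub_top_left_le (C : Submodule F W) :
    Module.finrank F (tensSub F (⊤ : Submodule F V) C)
      ≤ Module.finrank F V * Module.finrank F C := by
  rw [tensSub_top_left]
  calc Module.finrank F (LinearMap.range (LinearMap.lTensor V C.subtype))
      ≤ Module.finrank F (V ⊗[F] C) := LinearMap.finrank_range_le _
    _ = Module.finrank F V * Module.finrank F C := Module.finrank_tensorProduct ..

lemma finrank_sup_le' (A B : Submodule F V) :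
    Module.finrank F (A ⊔ B : Submodule F V)
      ≤ Module.finrank F A + Module.finrank F B := by
  have := Submodule.finrank_sup_add_finrank_inf_eq A B
  omega

lemma finrank_iSup_fin_le {ι : Type*} [Fintype ι] (M : ι → Submodule F V) :
    Module.finrank F (⨆ i, M i : Submodule F V) ≤ ∑ i, Module.finrank F (M i) := by
  classical
  rw [← Finset.sup_univ_eq_iSup]
  have h : ∀ s : Finset ι,
      Module.finrank F ↥(s.sup M) ≤ ∑ i ∈ s, Module.finrank F (M i) := by
    intro s
    induction s using Finset.induction_on with
    | empty => simp
    | @insert a s ha ih =>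
      rw [Finset.sup_insert, Finset.sum_insert ha]
      exact le_trans (finrank_sup_le' _ _) (by omega)
  exact h Finset.univ

end rank

/-- coordinate functional on the tensor product induced by a dual basis element -/
noncomputable def coordMap {d : ℕ} (b : Module.Basis (Fin d) F V) (i : Fin d) :
    V ⊗[F] W →ₗ[F] W :=
  (TensorProduct.lid F W).toLinearMap ∘ₗ LinearMap.rTensor W (b.coord i)

lemma sum_coordMap {d : ℕ} (b : Module.Basis (Fin d) F V) (t : V ⊗[F] W) :
    ∑ i, b i ⊗ₜ[F] (coordMap b i t) = t := by
  have key : (∑ i, TensorProduct.mk F V W (b i) ∘ₗ coordMap (W := W) b i)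
      = LinearMap.id := by
    apply TensorProduct.ext'
    intro v w
    simp only [LinearMap.sum_apply, LinearMap.comp_apply, coordMap, LinearMap.id_apply]
    have hterm : ∀ i : Fin d, (TensorProduct.mk F V W (b i))
        ((TensorProduct.lid F W) (LinearMap.rTensor W (b.coord i) (v ⊗ₜ[F] w)))
        = (b.repr v i • b i) ⊗ₜ[F] w := by
      intro i
      rw [LinearMap.rTensor_tmul, TensorProduct.lid_tmul, TensorProduct.mk_apply,
        TensorProduct.tmul_smul, TensorProduct.smul_tmul', Module.Basis.coord_apply]
    calc ∑ i, (TensorProduct.mk F V W (b i))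
          ((TensorProduct.lid F W) (LinearMap.rTensor W (b.coord i) (v ⊗ₜ[F] w)))
        = ∑ i, (b.repr v i • b i) ⊗ₜ[F] w := Finset.sum_congr rfl (fun i _ => hterm i)
      _ = (∑ i, b.repr v i • b i) ⊗ₜ[F] w := (TensorProduct.sum_tmul ..).symm
      _ = v ⊗ₜ[F] w := by rw [Module.Basis.sum_repr]
  have := congrArg (fun (L : V ⊗[F] W →ₗ[F] V ⊗[F] W) => L t) key
  simpa [LinearMap.sum_apply, coordMap] using this

end Stmt16Aux

/-- Lower bound on the linear serializability deficit of the n-fold repetition.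
Suppose a linear network code with edge spaces `{T e}` in `M*` (of dimension `d`)
has a nontrivial information vortex `{W e}` with `dim (W e₀) = k < m = dim (T e₀)`.
If adding a subspace `Tt ⊆ M* ⊗ F^n` of extra functionals of dimension `p` to every
edge makes the n-fold repetition serializable — i.e. the extended code, with edge
spaces `(T e ⊗ F^n) + Tt`, has no nontrivial information vortex — then
`p ≥ ((m - k)/d²)·n`. -/
theorem stmt16 {F : Type*} [Field F] {D : Type*} [AddCommGroup D] [Module F D]
    [FiniteDimensional F D]
    {E : Type*} (Src : Set E) (In : E → Set E) (T W : E → Submodule F D)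
    (hle : ∀ e, W e ≤ T e)
    (hsrc : ∀ s ∈ Src, W s = T s)
    (hord : ∀ e ∉ Src, W e = T e ⊓ ⨆ e' ∈ In e, W e')
    (d m k : ℕ) (hd : Module.finrank F D = d)
    (e₀ : E) (hm : Module.finrank F (T e₀) = m) (hk : Module.finrank F (W e₀) = k)
    (hkm : k < m)
    (n : ℕ) (hn : 1 ≤ n)
    (Tt : Submodule F (D ⊗[F] (Fin n → F))) (p : ℕ) (hp : Module.finrank F Tt = p)
    (hser : ∀ W' : E → Submodule F (D ⊗[F] (Fin n → F)),
      (∀ e, W' e ≤ tensSub F (T e) (⊤ : Submodule F (Fin n → F)) ⊔ Tt) →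
      (∀ s ∈ Src, W' s = tensSub F (T s) (⊤ : Submodule F (Fin n → F)) ⊔ Tt) →
      (∀ e ∉ Src, W' e = (tensSub F (T e) (⊤ : Submodule F (Fin n → F)) ⊔ Tt)
          ⊓ ⨆ e' ∈ In e, W' e') →
      ∀ e, W' e = tensSub F (T e) (⊤ : Submodule F (Fin n → F)) ⊔ Tt) :
    ((m : ℝ) - k) / (d ^ 2 : ℝ) * n ≤ p := by
  classical
  open Stmt16Aux in
  -- `d ≥ 1`
  have hd1 : 1 ≤ d := by
    by_contra h
    have hmd : m ≤ d := by
      rw [← hm, ← hd]; exact Submodule.finrank_le (T e₀)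
    omega
  -- the subspace `Q` of `F^n` capturing the coordinates of `Tt`
  let b : Module.Basis (Fin d) F D := Module.finBasisOfFinrankEq F D hd
  let Q : Submodule F (Fin n → F) :=
    ⨆ i : Fin d, Submodule.map (coordMap b i) Tt
  have hTtQ : Tt ≤ tensSub F (⊤ : Submodule F D) Q := by
    intro t ht
    rw [← sum_coordMap b t]
    refine Submodule.sum_mem _ fun i _ => tmul_mem_tensSub trivial ?_
    exact le_iSup (fun i => Submodule.map (coordMap b i) Tt) i ⟨t, ht, rfl⟩
  have hQrank : Module.finrank F Q ≤ d * p := by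
    calc Module.finrank F Q
        ≤ ∑ i : Fin d, Module.finrank F (Submodule.map (coordMap b i) Tt) :=
          finrank_iSup_fin_le _
      _ ≤ ∑ _i : Fin d, p := Finset.sum_le_sum fun i _ => by
          rw [← hp]; exact Submodule.finrank_map_le _ _
      _ = d * p := by simp [Finset.sum_const, Finset.card_univ]
  -- abbreviations
  set TQ : Submodule F (D ⊗[F] (Fin n → F)) := tensSub F (⊤ : Submodule F D) Q with hTQ
  set T' : E → Submodule F (D ⊗[F] (Fin n → F)) :=
    fun e => tensSub F (T e) (⊤ : Submodule F (Fin n → F)) ⊔ Tt with hT'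
  -- key modular identity
  have key : ∀ A B : Submodule F D,
      (tensSub F A (⊤ : Submodule F (Fin n → F)) ⊔ TQ)
        ⊓ (tensSub F B (⊤ : Submodule F (Fin n → F)) ⊔ TQ)
      = tensSub F (A ⊓ B) (⊤ : Submodule F (Fin n → F)) ⊔ TQ := by
    intro A B
    rw [hTQ, ← comap_lTensor_mkQ, ← comap_lTensor_mkQ, ← Submodule.comap_inf,
      tensSub_top_inf, comap_lTensor_mkQ]
  -- the monotone operator and its least fixed point
  let G : (E → Submodule F (D ⊗[F] (Fin n → F)))
      →o (E → Submodule F (D ⊗[F] (Fin n → F))) :=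
    ⟨fun X e => if e ∈ Src then T' e else T' e ⊓ ⨆ e' ∈ In e, X e', by
      intro X Y hXY e
      dsimp only
      split_ifs with h
      · exact le_rfl
      · exact inf_le_inf_left _ (iSup₂_mono fun e' _ => hXY e')⟩
  set X := OrderHom.lfp G with hX
  have hfix : G X = X := OrderHom.map_lfp G
  have h1 : ∀ e, X e ≤ T' e := by
    intro e
    conv_lhs => rw [← hfix]
    show (if e ∈ Src then T' e else T' e ⊓ ⨆ e' ∈ In e, X e') ≤ T' e
    split_ifs with h
    · exact le_rfl
    · exact inf_le_left
  have h2 : ∀ s ∈ Src, X s = T' s := by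
    intro s hs
    conv_lhs => rw [← hfix]
    show (if s ∈ Src then T' s else T' s ⊓ ⨆ e' ∈ In s, X e') = T' s
    rw [if_pos hs]
  have h3 : ∀ e ∉ Src, X e = T' e ⊓ ⨆ e' ∈ In e, X e' := by
    intro e he
    conv_lhs => rw [← hfix]
    show (if e ∈ Src then T' e else T' e ⊓ ⨆ e' ∈ In e, X e')
      = T' e ⊓ ⨆ e' ∈ In e, X e'
    rw [if_neg he]
  have htriv := hser X h1 h2 h3
  -- the prefixed point
  let Vt : E → Submodule F (D ⊗[F] (Fin n → F)) :=
    fun e => (tensSub F (W e) (⊤ : Submodule F (Fin n → F)) ⊔ TQ) ⊓ T' e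
  have hpre : G Vt ≤ Vt := by
    intro e
    show (if e ∈ Src then T' e else T' e ⊓ ⨆ e' ∈ In e, Vt e') ≤ Vt e
    by_cases h : e ∈ Src
    · rw [if_pos h]
      refine le_inf ?_ le_rfl
      refine sup_le_sup (le_of_eq ?_) hTtQ
      rw [hsrc e h]
    · rw [if_neg h]
      refine le_inf ?_ inf_le_left
      have hb : (⨆ e' ∈ In e, Vt e')
          ≤ tensSub F (⨆ e' ∈ In e, W e') (⊤ : Submodule F (Fin n → F)) ⊔ TQ := by
        refine iSup₂_le fun e' he' => ?_
        refine le_trans inf_le_left (sup_le_sup ?_ le_rfl)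
        exact tensSub_mono (le_iSup₂ (f := fun e' (_ : e' ∈ In e) => W e') e' he') le_rfl
      have ha : T' e ≤ tensSub F (T e) (⊤ : Submodule F (Fin n → F)) ⊔ TQ :=
        sup_le_sup le_rfl hTtQ
      calc T' e ⊓ ⨆ e' ∈ In e, Vt e'
          ≤ (tensSub F (T e) (⊤ : Submodule F (Fin n → F)) ⊔ TQ)
            ⊓ (tensSub F (⨆ e' ∈ In e, W e') (⊤ : Submodule F (Fin n → F)) ⊔ TQ) :=
            inf_le_inf ha hb
        _ = tensSub F (T e ⊓ ⨆ e' ∈ In e, W e') (⊤ : Submodule F (Fin n → F)) ⊔ TQ :=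
            key _ _
        _ = tensSub F (W e) (⊤ : Submodule F (Fin n → F)) ⊔ TQ := by rw [← hord e h]
  have hXV : X ≤ Vt := OrderHom.lfp_le G hpre
  -- rank computation
  have hchain : tensSub F (T e₀) (⊤ : Submodule F (Fin n → F))
      ≤ tensSub F (W e₀) (⊤ : Submodule F (Fin n → F)) ⊔ TQ := by
    have h0 : T' e₀ ≤ Vt e₀ := by
      have hx := hXV e₀
      rw [htriv e₀] at hx
      exact hx
    exact le_trans le_sup_left (le_trans h0 inf_le_left)
  have hrank1 : m * n
      ≤ Module.finrank F ↥(tensSub F (W e₀) (⊤ : Submodule F (Fin n → F)) ⊔ TQ) := by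
    have := Submodule.finrank_mono hchain
    rwa [finrank_tensSub_top_right_eq, hm, Module.finrank_fin_fun] at this
  have hrank2 : Module.finrank F ↥(tensSub F (W e₀) (⊤ : Submodule F (Fin n → F)) ⊔ TQ)
      ≤ k * n + d * (d * p) := by
    refine le_trans (finrank_sup_le' _ _) (Nat.add_le_add ?_ ?_)
    · rw [finrank_tensSub_top_right_eq, hk, Module.finrank_fin_fun]
    · calc Module.finrank F TQ ≤ Module.finrank F D * Module.finrank F Q :=
          finrank_tensSub_top_left_le _
        _ ≤ d * (d * p) := by rw [hd]; exact Nat.mul_le_mul_left d hQrank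
  have hnat : m * n ≤ k * n + d * (d * p) := le_trans hrank1 hrank2
  -- arithmetic
  have hd2 : (0 : ℝ) < (d : ℝ) ^ 2 := by
    have : (1 : ℝ) ≤ (d : ℝ) := by exact_mod_cast hd1
    nlinarith
  rw [div_mul_eq_mul_div, div_le_iff₀ hd2]
  have hcast : ((m : ℝ)) * n ≤ (k : ℝ) * n + (d : ℝ) * ((d : ℝ) * p) := by
    exact_mod_cast hnat
  nlinarith [hcast]
end

section
/- Consider the 2-cycle network code over F_2 with message tuple (X, Y, Z) of independent uniform bits, where source x = (X, Z) enters u, source y = (Y, Z) enters v, and the coding functions on a = (u,v) and b = (v,u) are both f_a = f_b = X + Y. Then this code is not serializable: the subspaces W_x = span{X*, Z*}, W_y = span{Y*, Z*}, W_a = W_b = 0 of the dual of F_2³ form a nontrivial information vortex, i.e., T_a ∩ (W_b + W_x) = 0 and T_b ∩ (W_a + W_y) = 0 where T_a = T_b = span{X* + Y*}. -/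
/-- The coordinate functionals `X*, Y*, Z*` on the message space `F₂³`. -/
noncomputable def Xs : (Fin 3 → ZMod 2) →ₗ[ZMod 2] ZMod 2 := LinearMap.proj 0
noncomputable def Ys : (Fin 3 → ZMod 2) →ₗ[ZMod 2] ZMod 2 := LinearMap.proj 1
noncomputable def Zs : (Fin 3 → ZMod 2) →ₗ[ZMod 2] ZMod 2 := LinearMap.proj 2

lemma Xs_apply (v : Fin 3 → ZMod 2) : Xs v = v 0 := rfl
lemma Ys_apply (v : Fin 3 → ZMod 2) : Ys v = v 1 := rfl
lemma Zs_apply (v : Fin 3 → ZMod 2) : Zs v = v 2 := rfl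

/-- The 2-cycle code over `F₂` with sources `x = (X,Z)`, `y = (Y,Z)` and
`f_a = f_b = X + Y` has a nontrivial information vortex with
`W_x = span{X*,Z*}`, `W_y = span{Y*,Z*}`, `W_a = W_b = 0`:
`T_a ∩ (W_b + W_x) = 0` and `T_b ∩ (W_a + W_y) = 0`, while `T_a ≠ 0`;
hence the code is not serializable. -/
theorem stmt17 :
    Submodule.span (ZMod 2) {Xs + Ys} ⊓
        ((⊥ : Submodule (ZMod 2) ((Fin 3 → ZMod 2) →ₗ[ZMod 2] ZMod 2))
          ⊔ Submodule.span (ZMod 2) {Xs, Zs}) = ⊥ ∧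
    Submodule.span (ZMod 2) {Xs + Ys} ⊓
        ((⊥ : Submodule (ZMod 2) ((Fin 3 → ZMod 2) →ₗ[ZMod 2] ZMod 2))
          ⊔ Submodule.span (ZMod 2) {Ys, Zs}) = ⊥ ∧
    Submodule.span (ZMod 2) {Xs + Ys} ≠ ⊥ := by
  refine ⟨?_, ?_, ?_⟩
  · rw [bot_sup_eq, Submodule.eq_bot_iff]
    rintro f ⟨hf1, hf2⟩
    obtain ⟨c, rfl⟩ := Submodule.mem_span_singleton.mp hf1
    obtain ⟨a, b, hab⟩ := Submodule.mem_span_pair.mp hf2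
    have h := congrArg (fun g => g (Pi.single 1 1)) hab
    simp [Xs_apply, Ys_apply, Zs_apply, Pi.single_apply] at h
    rw [← h, zero_smul]
  · rw [bot_sup_eq, Submodule.eq_bot_iff]
    rintro f ⟨hf1, hf2⟩
    obtain ⟨c, rfl⟩ := Submodule.mem_span_singleton.mp hf1
    obtain ⟨a, b, hab⟩ := Submodule.mem_span_pair.mp hf2
    have h := congrArg (fun g => g (Pi.single 0 1)) hab
    simp [Xs_apply, Ys_apply, Zs_apply, Pi.single_apply] at h
    rw [← h, zero_smul]
  · intro h
    have : Xs + Ys ∈ (⊥ : Submodule (ZMod 2) ((Fin 3 → ZMod 2) →ₗ[ZMod 2] ZMod 2)) := by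
      rw [← h]; exact Submodule.mem_span_singleton_self _
    have h2 := congrArg (fun g => g (Pi.single 0 1)) (Submodule.mem_bot _ |>.mp this)
    simp [Xs_apply, Ys_apply, Pi.single_apply] at h2
end
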